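/- arXiv:2302.03115 — 5 statements merged into one kernel-verified Lean document; each statement's English description precedes it below -/
import Mathlib

section
/- Let (x_1,y_1),...,(x_k,y_k) be drawn i.i.d. from D, let α = (1/k)·Σ_{i=1}^k y_i be the label proportion of the bag, and for a fixed index j let the surrogate label ỹ_j be drawn (conditionally on the bag) from Bernoulli(α). Then for any bounded measurable function g : X × {0,1} → ℝ^d, E[g(x_j, ỹ_j)] = (1/k)·E[g(x_j, y_j)] + ((k−1)(1−p)/k)·E[g(x_j, 0)] + ((k−1)p/k)·E[g(x_j, 1)], where the expectation on the left is over both the sample and the surrogate label. -/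
open MeasureTheory Real

noncomputable section

/-- Real value of a `{0,1}` label encoded as a `Bool`. -/
def bval (b : Bool) : ℝ := if b then 1 else 0

lemma bval_nonneg (b : Bool) : 0 ≤ bval b := by cases b <;> simp [bval]
lemma bval_le_one (b : Bool) : bval b ≤ 1 := by cases b <;> simp [bval]

lemma pi_map_eval {Z : Type*} [MeasurableSpace Z] (D : Measure Z) [IsProbabilityMeasure D]
    {k : ℕ} (j : Fin k) :
    (Measure.pi fun _ : Fin k => D).map (fun f => f j) = D := by
  ext s hs
  rw [Measure.map_apply (measurable_pi_apply j) hs]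
  have h1 : (fun f : Fin k → Z => f j) ⁻¹' s
      = Set.univ.pi (Function.update (fun _ => Set.univ) j s) := Set.eval_preimage
  rw [h1, Measure.pi_pi]
  simp [Function.update_apply, apply_ite D, measure_univ, Finset.prod_ite_eq]

lemma pi_map_pair {Z : Type*} [MeasurableSpace Z] (D : Measure Z) [IsProbabilityMeasure D]
    {k : ℕ} {i j : Fin k} (hij : i ≠ j) :
    (Measure.pi fun _ : Fin k => D).map (fun f => (f i, f j)) = D.prod D := by
  refine (Measure.prod_eq fun s t hs ht => ?_).symm
  rw [Measure.map_apply ((measurable_pi_apply i).prodMk (measurable_pi_apply j)) (hs.prod ht)]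
  have h1 : (fun f : Fin k → Z => (f i, f j)) ⁻¹' (s ×ˢ t)
      = Set.univ.pi (Function.update (Function.update (fun _ => Set.univ) i s) j t) := by
    ext f
    simp only [Set.mem_preimage, Set.mem_prod, Set.mem_pi, Set.mem_univ, true_implies,
      Function.update_apply]
    constructor
    · rintro ⟨h1, h2⟩ l
      by_cases hlj : l = j
      · simp [hlj, h2]
      · by_cases hli : l = i
        · simp [hlj, hli, h1, hij]
        · simp [hlj, hli]
    · intro h
      refine ⟨?_, ?_⟩
      · have := h i; simpa [hij] using this
      · have := h j; simpa using this
  rw [h1, Measure.pi_pi]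
  rw [← Finset.mul_prod_erase Finset.univ _ (Finset.mem_univ j),
    ← Finset.mul_prod_erase _ _ (Finset.mem_erase.2 ⟨hij, Finset.mem_univ i⟩)]
  have hrest : ∏ l ∈ (Finset.univ.erase j).erase i,
      D (Function.update (Function.update (fun _ => Set.univ) i s) j t l) = 1 := by
    refine Finset.prod_eq_one fun l hl => ?_
    have hli : l ≠ i := Finset.ne_of_mem_erase hl
    have hlj : l ≠ j := Finset.ne_of_mem_erase (Finset.mem_of_mem_erase hl)
    simp [Function.update_apply, hli, hlj, measure_univ]
  rw [hrest, mul_one]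
  simp [Function.update_apply, hij, mul_comm]

lemma integral_unif_ite {E : Type*} [NormedAddCommGroup E] [NormedSpace ℝ E] [CompleteSpace E]
    {c : ℝ} (hc0 : 0 ≤ c) (hc1 : c ≤ 1) (A B : E) :
    ∫ u, (if u ≤ c then A else B) ∂(volume.restrict (Set.Icc (0:ℝ) 1))
      = c • A + (1 - c) • B := by
  set μu := volume.restrict (Set.Icc (0:ℝ) 1) with hμu
  haveI : IsProbabilityMeasure μu := ⟨by simp [hμu, Real.volume_Icc]⟩
  have hfun : (fun u : ℝ => if u ≤ c then A else B)
      = fun u => (Set.Iic c).indicator (fun _ => A - B) u + B := by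
    funext u
    by_cases h : u ≤ c
    · simp [Set.indicator_of_mem, Set.mem_Iic, h]
    · simp [Set.indicator_of_notMem, Set.mem_Iic, h]
  rw [hfun, integral_add ((integrable_const (A - B)).indicator measurableSet_Iic)
    (integrable_const B), integral_indicator_const (A - B) measurableSet_Iic, integral_const]
  have hμIic : μu (Set.Iic c) = ENNReal.ofReal c := by
    rw [hμu, Measure.restrict_apply measurableSet_Iic]
    have : Set.Iic c ∩ Set.Icc (0:ℝ) 1 = Set.Icc 0 c := by
      ext u
      simp only [Set.mem_inter_iff, Set.mem_Iic, Set.mem_Icc]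
      exact ⟨fun ⟨h1, h2, _⟩ => ⟨h2, h1⟩, fun ⟨h1, h2⟩ => ⟨h2, h1, h2.trans hc1⟩⟩
    rw [this, Real.volume_Icc, sub_zero]
  rw [measureReal_def, measureReal_def, hμIic, ENNReal.toReal_ofReal hc0, measure_univ, ENNReal.toReal_one, one_smul,
    smul_sub, sub_smul, one_smul]
  abel

lemma integral_bval {X : Type*} [MeasurableSpace X] (D : Measure (X × Bool)) :
    ∫ z, bval z.2 ∂D = (D {z : X × Bool | z.2 = true}).toReal := by
  have h1 : (fun z : X × Bool => bval z.2)
      = Set.indicator {z : X × Bool | z.2 = true} (fun _ => (1:ℝ)) := by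
    funext z
    cases hz : z.2 <;> simp [bval, Set.indicator_apply, hz]
  have hms : MeasurableSet {z : X × Bool | z.2 = true} :=
    measurable_snd (measurableSet_singleton true)
  rw [h1, integral_indicator_const (1:ℝ) hms, smul_eq_mul, mul_one, measureReal_def]
set_option maxHeartbeats 2000000 in
/-- Proposition 1, debiasing identity for surrogate labels.
The bag is a vector of `k` i.i.d. draws from `D`; an independent uniform variable on
`[0,1]` is used to draw, conditionally on the bag, a surrogate label
`ỹⱼ ~ Bernoulli(α)` via `ỹⱼ = 1{U ≤ α}`. -/
theorem stmt_0
    {X : Type*} [MeasurableSpace X] {d : ℕ}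
    (D : Measure (X × Bool)) [IsProbabilityMeasure D]
    (p : ℝ) (hp : p = (D {z : X × Bool | z.2 = true}).toReal)
    (k : ℕ) (hk : 1 ≤ k) (j : Fin k)
    (g : X × Bool → EuclideanSpace ℝ (Fin d)) (hg : Measurable g)
    (M : ℝ) (hgb : ∀ z, ‖g z‖ ≤ M)
    -- probability space carrying the bag and an independent uniform `[0,1]` variable
    (P : Measure ((Fin k → X × Bool) × ℝ))
    (hP : P = (Measure.pi fun _ : Fin k => D).prod
        (volume.restrict (Set.Icc (0:ℝ) 1)))
    -- label proportion of the bag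
    (α : ((Fin k → X × Bool) × ℝ) → ℝ)
    (hα : ∀ ω, α ω = (1 / (k:ℝ)) * ∑ i, bval (ω.1 i).2)
    -- surrogate label for `x_j`: `Bernoulli(α)` given the bag
    (ytil : ((Fin k → X × Bool) × ℝ) → Bool)
    (hytil : ∀ ω, ytil ω = true ↔ ω.2 ≤ α ω) :
    ∫ ω, g ((ω.1 j).1, ytil ω) ∂P
      = (1 / (k:ℝ)) • (∫ z, g z ∂D)
        + ((((k:ℝ) - 1) * (1 - p)) / k) • (∫ z, g (z.1, false) ∂D)
        + ((((k:ℝ) - 1) * p) / k) • (∫ z, g (z.1, true) ∂D) := by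
  classical
  have hbvalm : Measurable bval := measurable_from_top
  have hkpos : (0:ℝ) < k := by exact_mod_cast hk
  have hk0 : (k:ℝ) ≠ 0 := ne_of_gt hkpos
  subst hP
  set Ppi : Measure (Fin k → X × Bool) := Measure.pi fun _ : Fin k => D with hPpi
  set μu : Measure ℝ := volume.restrict (Set.Icc (0:ℝ) 1) with hμu
  haveI : IsProbabilityMeasure μu := ⟨by simp [hμu, Real.volume_Icc]⟩
  -- bound is nonnegative
  have hNE : Nonempty (X × Bool) := by
    by_contra h
    rw [not_nonempty_iff] at h
    have h1 : D Set.univ = 1 := measure_univ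
    rw [Set.univ_eq_empty_iff.2 h] at h1
    simp at h1
  obtain ⟨z0⟩ := hNE
  have hM0 : 0 ≤ M := le_trans (norm_nonneg _) (hgb z0)
  -- the label proportion as a function of the bag
  set a : (Fin k → X × Bool) → ℝ := fun f => (1 / (k:ℝ)) * ∑ i, bval (f i).2 with ha
  have haω : ∀ ω : (Fin k → X × Bool) × ℝ, α ω = a ω.1 := fun ω => hα ω
  have ha0 : ∀ f, 0 ≤ a f := by
    intro f
    apply mul_nonneg (by positivity)
    exact Finset.sum_nonneg fun i _ => bval_nonneg _
  have ha1 : ∀ f, a f ≤ 1 := by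
    intro f
    rw [ha]
    have hs : ∑ i : Fin k, bval ((f i).2) ≤ (k:ℝ) := by
      calc ∑ i : Fin k, bval ((f i).2) ≤ ∑ _i : Fin k, (1:ℝ) :=
            Finset.sum_le_sum fun i _ => bval_le_one _
        _ = (k:ℝ) := by simp
    calc (1 / (k:ℝ)) * ∑ i : Fin k, bval ((f i).2) ≤ (1 / (k:ℝ)) * k := by
          apply mul_le_mul_of_nonneg_left hs (by positivity)
      _ = 1 := by field_simp
  have ham : Measurable a := by
    rw [ha]
    exact (Finset.measurable_sum Finset.univ fun i _ =>
      hbvalm.comp ((measurable_pi_apply i).snd)).const_mul _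
  -- rewrite the integrand
  have hF : ∀ ω : (Fin k → X × Bool) × ℝ, g ((ω.1 j).1, ytil ω)
      = if ω.2 ≤ a ω.1 then g ((ω.1 j).1, true) else g ((ω.1 j).1, false) := by
    intro ω
    by_cases h : ω.2 ≤ a ω.1
    · have hy : ytil ω = true := (hytil ω).2 (by rw [haω ω]; exact h)
      rw [hy, if_pos h]
    · have hy : ytil ω = false := by
        cases hyt : ytil ω
        · rfl
        · exact absurd (by rw [← haω ω]; exact (hytil ω).1 hyt) h
      rw [hy, if_neg h]
  simp_rw [hF]
  -- Fubini
  have hAm : ∀ b : Bool, Measurable fun ω : (Fin k → X × Bool) × ℝ => g ((ω.1 j).1, b) :=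
    fun b => hg.comp ((((measurable_pi_apply j).comp measurable_fst).fst).prodMk
      measurable_const)
  have hFm : Measurable fun ω : (Fin k → X × Bool) × ℝ =>
      if ω.2 ≤ a ω.1 then g ((ω.1 j).1, true) else g ((ω.1 j).1, false) :=
    Measurable.ite (measurableSet_le measurable_snd (ham.comp measurable_fst))
      (hAm true) (hAm false)
  have hFint : Integrable (fun ω : (Fin k → X × Bool) × ℝ =>
      if ω.2 ≤ a ω.1 then g ((ω.1 j).1, true) else g ((ω.1 j).1, false)) (Ppi.prod μu) :=
    ⟨hFm.aestronglyMeasurable, HasFiniteIntegral.of_bounded (C := M)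
      (ae_of_all _ fun ω => by by_cases h : ω.2 ≤ a ω.1 <;> simp [h, hgb])⟩
  rw [integral_prod _ hFint]
  have hinner : ∀ f : Fin k → X × Bool,
      (∫ u, (if u ≤ a f then g ((f j).1, true) else g ((f j).1, false)) ∂μu)
      = a f • g ((f j).1, true) + (1 - a f) • g ((f j).1, false) := fun f =>
    integral_unif_ite (ha0 f) (ha1 f) _ _
  simp_rw [hinner]
  -- express integrand as a sum over coordinates
  have hsum : ∀ f : Fin k → X × Bool,
      a f • g ((f j).1, true) + (1 - a f) • g ((f j).1, false)
      = ∑ i : Fin k, ((1:ℝ) / k) • (bval ((f i).2) • g ((f j).1, true)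
          + (1 - bval ((f i).2)) • g ((f j).1, false)) := by
    intro f
    rw [← Finset.smul_sum, Finset.sum_add_distrib, ← Finset.sum_smul, ← Finset.sum_smul]
    have h1 : ∑ i : Fin k, (1 - bval ((f i).2)) = (k:ℝ) - ∑ i : Fin k, bval ((f i).2) := by
      rw [Finset.sum_sub_distrib]; simp
    rw [h1, smul_add, smul_smul, smul_smul, ha]
    congr 2
    field_simp
  simp_rw [hsum]
  -- integrability of each summand
  have hsm : ∀ i : Fin k, Measurable fun f : Fin k → X × Bool =>
      ((1:ℝ) / k) • (bval ((f i).2) • g ((f j).1, true)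
        + (1 - bval ((f i).2)) • g ((f j).1, false)) := by
    intro i
    have hbm : Measurable fun f : Fin k → X × Bool => bval ((f i).2) :=
      hbvalm.comp (measurable_pi_apply i).snd
    have hgm : ∀ b : Bool, Measurable fun f : Fin k → X × Bool => g ((f j).1, b) :=
      fun b => hg.comp (((measurable_pi_apply j).fst).prodMk measurable_const)
    exact ((hbm.smul (hgm true)).add ((measurable_const.sub hbm).smul (hgm false))).const_smul ((1:ℝ) / k)
  have hsb : ∀ (i : Fin k) (f : Fin k → X × Bool),
      ‖((1:ℝ) / k) • (bval ((f i).2) • g ((f j).1, true)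
        + (1 - bval ((f i).2)) • g ((f j).1, false))‖ ≤ 2 * M := by
    intro i f
    have hb0 := bval_nonneg ((f i).2)
    have hb1 := bval_le_one ((f i).2)
    have h1k : ‖(1:ℝ) / k‖ ≤ 1 := by
      rw [Real.norm_eq_abs, abs_of_nonneg (by positivity)]
      rw [div_le_one hkpos]
      exact_mod_cast hk
    calc ‖((1:ℝ) / k) • (bval ((f i).2) • g ((f j).1, true)
            + (1 - bval ((f i).2)) • g ((f j).1, false))‖
        = ‖(1:ℝ) / k‖ * ‖bval ((f i).2) • g ((f j).1, true)
            + (1 - bval ((f i).2)) • g ((f j).1, false)‖ := norm_smul _ _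
      _ ≤ 1 * (‖bval ((f i).2) • g ((f j).1, true)‖
            + ‖(1 - bval ((f i).2)) • g ((f j).1, false)‖) :=
          mul_le_mul h1k (norm_add_le _ _) (norm_nonneg _) zero_le_one
      _ ≤ 1 * (1 * M + 1 * M) := by
          have e1 : ‖bval ((f i).2)‖ ≤ 1 := by
            rw [Real.norm_eq_abs, abs_of_nonneg hb0]
            exact hb1
          have e2 : ‖1 - bval ((f i).2)‖ ≤ 1 := by
            rw [Real.norm_eq_abs, abs_of_nonneg (by linarith)]
            linarith
          apply mul_le_mul_of_nonneg_left _ zero_le_one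
          apply add_le_add
          · rw [norm_smul]
            exact mul_le_mul e1 (hgb _) (norm_nonneg _) zero_le_one
          · rw [norm_smul]
            exact mul_le_mul e2 (hgb _) (norm_nonneg _) zero_le_one
      _ = 2 * M := by ring
  have hsint : ∀ i : Fin k, Integrable (fun f : Fin k → X × Bool =>
      ((1:ℝ) / k) • (bval ((f i).2) • g ((f j).1, true)
        + (1 - bval ((f i).2)) • g ((f j).1, false))) Ppi :=
    fun i => ⟨(hsm i).aestronglyMeasurable, HasFiniteIntegral.of_bounded (C := 2 * M)
      (ae_of_all _ (hsb i))⟩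
  rw [integral_finset_sum Finset.univ fun i _ => hsint i]
  -- split off the term i = j
  rw [← Finset.add_sum_erase Finset.univ _ (Finset.mem_univ j)]
  -- the diagonal term
  have hdiag : (∫ f, ((1:ℝ) / k) • (bval ((f j).2) • g ((f j).1, true)
      + (1 - bval ((f j).2)) • g ((f j).1, false)) ∂Ppi)
      = ((1:ℝ) / k) • ∫ z, g z ∂D := by
    rw [integral_smul]
    congr 1
    have hfun : (fun f : Fin k → X × Bool => bval ((f j).2) • g ((f j).1, true)
        + (1 - bval ((f j).2)) • g ((f j).1, false)) = fun f => g (f j) := by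
      funext f
      generalize f j = z
      obtain ⟨x, b⟩ := z
      cases b <;> simp [bval]
    rw [hfun, ← pi_map_eval D j,
      integral_map (measurable_pi_apply j).aemeasurable hg.aestronglyMeasurable]
  -- the off-diagonal terms
  have hoff : ∀ i : Fin k, i ≠ j →
      (∫ f, ((1:ℝ) / k) • (bval ((f i).2) • g ((f j).1, true)
        + (1 - bval ((f i).2)) • g ((f j).1, false)) ∂Ppi)
      = ((1:ℝ) / k) • (p • (∫ z, g (z.1, true) ∂D) + (1 - p) • (∫ z, g (z.1, false) ∂D)) := by
    intro i hij
    rw [integral_smul]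
    congr 1
    have hH : Measurable fun zz : (X × Bool) × (X × Bool) =>
        bval zz.1.2 • g (zz.2.1, true) + (1 - bval zz.1.2) • g (zz.2.1, false) := by
      have hbm : Measurable fun zz : (X × Bool) × (X × Bool) => bval zz.1.2 :=
        hbvalm.comp measurable_fst.snd
      have hgm : ∀ b : Bool, Measurable fun zz : (X × Bool) × (X × Bool) => g (zz.2.1, b) :=
        fun b => hg.comp ((measurable_snd.fst).prodMk measurable_const)
      exact (hbm.smul (hgm true)).add ((measurable_const.sub hbm).smul (hgm false))
    have step1 : (∫ f, (bval ((f i).2) • g ((f j).1, true)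
        + (1 - bval ((f i).2)) • g ((f j).1, false)) ∂Ppi)
        = ∫ zz : (X × Bool) × (X × Bool),
            (bval zz.1.2 • g (zz.2.1, true) + (1 - bval zz.1.2) • g (zz.2.1, false))
          ∂(D.prod D) := by
      rw [← pi_map_pair D hij,
        integral_map ((measurable_pi_apply i).prodMk (measurable_pi_apply j)).aemeasurable
          hH.aestronglyMeasurable]
    rw [step1]
    -- integrability over D.prod D
    have hb2 : ∀ zz : (X × Bool) × (X × Bool),
        ‖bval zz.1.2 • g (zz.2.1, true)‖ ≤ M := by
      intro zz
      rw [norm_smul]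
      have h1 : ‖bval zz.1.2‖ ≤ 1 := by
        rw [Real.norm_eq_abs, abs_of_nonneg (bval_nonneg _)]
        exact bval_le_one _
      calc ‖bval zz.1.2‖ * ‖g (zz.2.1, true)‖ ≤ 1 * M :=
          mul_le_mul h1 (hgb _) (norm_nonneg _) zero_le_one
        _ = M := one_mul M
    have hb3 : ∀ zz : (X × Bool) × (X × Bool),
        ‖(1 - bval zz.1.2) • g (zz.2.1, false)‖ ≤ M := by
      intro zz
      rw [norm_smul]
      have hb0 := bval_nonneg zz.1.2
      have hb1 := bval_le_one zz.1.2
      have h1 : ‖1 - bval zz.1.2‖ ≤ 1 := by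
        rw [Real.norm_eq_abs, abs_of_nonneg (by linarith)]
        linarith
      calc ‖1 - bval zz.1.2‖ * ‖g (zz.2.1, false)‖ ≤ 1 * M :=
          mul_le_mul h1 (hgb _) (norm_nonneg _) zero_le_one
        _ = M := one_mul M
    have hint1 : Integrable (fun zz : (X × Bool) × (X × Bool) =>
        bval zz.1.2 • g (zz.2.1, true)) (D.prod D) := by
      refine ⟨?_, HasFiniteIntegral.of_bounded (C := M) (ae_of_all _ hb2)⟩
      exact ((hbvalm.comp measurable_fst.snd).smul
        (hg.comp ((measurable_snd.fst).prodMk measurable_const))).aestronglyMeasurable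
    have hint2 : Integrable (fun zz : (X × Bool) × (X × Bool) =>
        (1 - bval zz.1.2) • g (zz.2.1, false)) (D.prod D) := by
      refine ⟨?_, HasFiniteIntegral.of_bounded (C := M) (ae_of_all _ hb3)⟩
      exact ((measurable_const.sub (hbvalm.comp measurable_fst.snd)).smul
        (hg.comp ((measurable_snd.fst).prodMk measurable_const))).aestronglyMeasurable
    rw [integral_add hint1 hint2]
    have hbD : ∫ z : X × Bool, bval z.2 ∂D = p := by
      rw [hp]; exact integral_bval D
    have hterm1 : (∫ zz : (X × Bool) × (X × Bool), bval zz.1.2 • g (zz.2.1, true) ∂(D.prod D))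
        = p • ∫ z, g (z.1, true) ∂D := by
      rw [integral_prod _ hint1]
      simp_rw [integral_smul]
      rw [integral_smul_const, hbD]
    have hterm2 : (∫ zz : (X × Bool) × (X × Bool),
        (1 - bval zz.1.2) • g (zz.2.1, false) ∂(D.prod D))
        = (1 - p) • ∫ z, g (z.1, false) ∂D := by
      rw [integral_prod _ hint2]
      simp_rw [integral_smul]
      rw [integral_smul_const]
      congr 1
      have hbint : Integrable (fun z : X × Bool => bval z.2) D := by
        refine ⟨(hbvalm.comp measurable_snd).aestronglyMeasurable, ?_⟩
        refine HasFiniteIntegral.of_bounded (C := 1) (ae_of_all _ fun z => ?_)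
        rw [Real.norm_eq_abs, abs_of_nonneg (bval_nonneg _)]
        exact bval_le_one _
      rw [integral_sub (integrable_const 1) hbint, hbD]
      simp
    rw [hterm1, hterm2]
  rw [Finset.sum_congr rfl fun i hi => hoff i (Finset.ne_of_mem_erase hi), hdiag,
    Finset.sum_const, Finset.card_erase_of_mem (Finset.mem_univ j)]
  simp only [Finset.card_univ, Fintype.card_fin]
  rw [← Nat.cast_smul_eq_nsmul ℝ (k - 1), Nat.cast_sub hk, Nat.cast_one]
  set IT := ∫ z, g (z.1, true) ∂D
  set IF := ∫ z, g (z.1, false) ∂D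
  set IG := ∫ z, g z ∂D
  rw [smul_add, smul_smul, smul_smul, smul_add, smul_smul, smul_smul]
  module
end
end

section
/- Let (x_1,y_1),...,(x_k,y_k) be drawn i.i.d. from D, let α = (1/k)·Σ_{i=1}^k y_i, and for a fixed index j let ỹ_j ∼ Bernoulli(α) conditionally on the bag. For any bounded measurable function g : X × {0,1} → ℝ^d define g̃(x, ỹ) = k·g(x, ỹ) − (k−1)(1−p)·g(x, 0) − (k−1)p·g(x, 1). Then E[g̃(x_j, ỹ_j)] = E_{(x,y)∼D}[g(x, y)], where the expectation on the left is over the bag and the choice of surrogate label. -/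
open MeasureTheory Real

noncomputable section

lemma aux_integrable {α : Type*} {E : Type*} [MeasurableSpace α] [NormedAddCommGroup E]
    {μ : Measure α} [IsFiniteMeasure μ] {f : α → E}
    (hm : AEStronglyMeasurable f μ) {C : ℝ} (hb : ∀ x, ‖f x‖ ≤ C) :
    Integrable f μ :=
  ⟨hm, HasFiniteIntegral.of_bounded (ae_of_all _ hb)⟩

lemma map_eval_pi' {Z : Type*} [MeasurableSpace Z] (D : Measure Z) [IsProbabilityMeasure D]
    {k : ℕ} (j : Fin k) :
    (Measure.pi fun _ : Fin k => D).map (fun ω => ω j) = D := by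
  ext s hs
  rw [Measure.map_apply (measurable_pi_apply j) hs]
  have hset : (fun ω : Fin k → Z => ω j) ⁻¹' s
      = Set.pi Set.univ (Function.update (fun _ => Set.univ) j s) := by
    ext ω
    simp only [Set.mem_preimage, Set.mem_pi, Set.mem_univ, true_implies, Function.update_apply]
    constructor
    · intro h l
      by_cases hl : l = j <;> simp [hl, h]
    · intro h
      simpa using h j
  rw [hset, Measure.pi_pi]
  rw [Fintype.prod_eq_single j (fun i hij => by simp [Function.update_of_ne hij])]
  simp

lemma map_pair_pi {Z : Type*} [MeasurableSpace Z] (D : Measure Z) [IsProbabilityMeasure D]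
    {k : ℕ} {i j : Fin k} (hij : i ≠ j) :
    (Measure.pi fun _ : Fin k => D).map (fun ω => (ω i, ω j)) = D.prod D := by
  refine (Measure.prod_eq fun s t hs ht => ?_).symm
  rw [Measure.map_apply ((measurable_pi_apply i).prodMk (measurable_pi_apply j)) (hs.prod ht)]
  have hset : (fun ω : Fin k → Z => (ω i, ω j)) ⁻¹' (s ×ˢ t)
      = Set.pi Set.univ (Function.update (Function.update (fun _ => Set.univ) i s) j t) := by
    ext ω
    simp only [Set.mem_preimage, Set.mem_prod, Set.mem_pi, Set.mem_univ, true_implies,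
      Function.update_apply]
    constructor
    · rintro ⟨h1, h2⟩ l
      by_cases hl : l = j
      · simp [hl, h2]
      · by_cases hl2 : l = i <;> simp [hl, hl2, h1, hij]
    · intro h
      refine ⟨?_, ?_⟩
      · have := h i; simpa [hij] using this
      · have := h j; simpa using this
  rw [hset, Measure.pi_pi]
  rw [← Finset.prod_subset (Finset.subset_univ ({i, j} : Finset (Fin k)))
      (fun l _ hl => by
        simp only [Finset.mem_insert, Finset.mem_singleton, not_or] at hl
        simp [Function.update_apply, hl.1, hl.2])]
  rw [Finset.prod_pair hij]
  simp [Function.update_apply, hij]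

lemma inner_int {E : Type*} [NormedAddCommGroup E] [NormedSpace ℝ E] [CompleteSpace E]
    {t : ℝ} (h0 : 0 ≤ t) (h1 : t ≤ 1) (A B : E) :
    ∫ u in Set.Icc (0:ℝ) 1, (if u ≤ t then A else B) = t • A + (1-t) • B := by
  haveI : IsProbabilityMeasure (volume.restrict (Set.Icc (0:ℝ) 1)) :=
    ⟨by simp [Real.volume_Icc]⟩
  have hsplit : (fun u : ℝ => if u ≤ t then A else B)
      = fun u => (Set.Iic t).indicator (fun _ => A) u + (Set.Ioi t).indicator (fun _ => B) u := by
    funext u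
    by_cases h : u ≤ t <;> simp [Set.indicator, h, not_le.mpr, not_le.mp]
  rw [hsplit, integral_add ((integrable_const A).indicator measurableSet_Iic)
      ((integrable_const B).indicator measurableSet_Ioi),
    integral_indicator_const _ measurableSet_Iic, integral_indicator_const _ measurableSet_Ioi,
    measureReal_def, measureReal_def, Measure.restrict_apply measurableSet_Iic, Measure.restrict_apply measurableSet_Ioi]
  have e1 : Set.Iic t ∩ Set.Icc (0:ℝ) 1 = Set.Icc 0 t := by
    ext u; simp only [Set.mem_inter_iff, Set.mem_Iic, Set.mem_Icc]
    constructor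
    · rintro ⟨a, b, _⟩; exact ⟨b, a⟩
    · rintro ⟨a, b⟩; exact ⟨b, a, le_trans b h1⟩
  have e2 : Set.Ioi t ∩ Set.Icc (0:ℝ) 1 = Set.Ioc t 1 := by
    ext u; simp only [Set.mem_inter_iff, Set.mem_Ioi, Set.mem_Icc, Set.mem_Ioc]
    constructor
    · rintro ⟨a, _, b⟩; exact ⟨a, b⟩
    · rintro ⟨a, b⟩; exact ⟨a, le_trans h0 a.le, b⟩
  rw [e1, e2, Real.volume_Icc, Real.volume_Ioc,
    ENNReal.toReal_ofReal (by linarith), ENNReal.toReal_ofReal (by linarith)]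
  ring_nf

lemma integral_eval_pi {Z : Type*} [MeasurableSpace Z] (D : Measure Z) [IsProbabilityMeasure D]
    {k : ℕ} (j : Fin k) {E : Type*} [NormedAddCommGroup E] [NormedSpace ℝ E]
    {f : Z → E} (hf : AEStronglyMeasurable f D) :
    ∫ ω, f (ω j) ∂(Measure.pi fun _ : Fin k => D) = ∫ z, f z ∂D := by
  have hmap := map_eval_pi' D j
  calc ∫ ω, f (ω j) ∂(Measure.pi fun _ : Fin k => D)
      = ∫ z, f z ∂((Measure.pi fun _ : Fin k => D).map (fun ω => ω j)) :=
        (integral_map (measurable_pi_apply j).aemeasurable (by rwa [hmap])).symm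
    _ = ∫ z, f z ∂D := by rw [hmap]

lemma integral_pair_pi {Z : Type*} [MeasurableSpace Z] (D : Measure Z) [IsProbabilityMeasure D]
    {k : ℕ} {i j : Fin k} (hij : i ≠ j) {E : Type*} [NormedAddCommGroup E] [NormedSpace ℝ E]
    {f : Z × Z → E} (hf : AEStronglyMeasurable f (D.prod D)) :
    ∫ ω, f (ω i, ω j) ∂(Measure.pi fun _ : Fin k => D) = ∫ z, f z ∂(D.prod D) := by
  have hmap := map_pair_pi D hij
  calc ∫ ω, f (ω i, ω j) ∂(Measure.pi fun _ : Fin k => D)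
      = ∫ z, f z ∂((Measure.pi fun _ : Fin k => D).map (fun ω => (ω i, ω j))) :=
        (integral_map ((measurable_pi_apply i).prodMk (measurable_pi_apply j)).aemeasurable
          (by rwa [hmap])).symm
    _ = ∫ z, f z ∂(D.prod D) := by rw [hmap]

lemma scalar_combine {E : Type*} [AddCommGroup E] [Module ℝ E] (t : ℝ) (A B : E) :
    t • A + (1 - t) • B = B + t • (A - B) := by module


/-- Corollary: unbiasedness of the debiased function `g̃`.
`g̃(x,ỹ) = k·g(x,ỹ) − (k−1)(1−p)·g(x,0) − (k−1)p·g(x,1)` satisfies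
`E[g̃(x_j, ỹ_j)] = E_{(x,y)∼D}[g(x,y)]`, the expectation on the left being over the
bag and the surrogate label. -/
theorem stmt_1
    {X : Type*} [MeasurableSpace X] {d : ℕ}
    (D : Measure (X × Bool)) [IsProbabilityMeasure D]
    (p : ℝ) (hp : p = (D {z : X × Bool | z.2 = true}).toReal)
    (k : ℕ) (hk : 1 ≤ k) (j : Fin k)
    (g : X × Bool → EuclideanSpace ℝ (Fin d)) (hg : Measurable g)
    (M : ℝ) (hgb : ∀ z, ‖g z‖ ≤ M)
    -- probability space carrying the bag and an independent uniform `[0,1]` variable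
    (P : Measure ((Fin k → X × Bool) × ℝ))
    (hP : P = (Measure.pi fun _ : Fin k => D).prod
        (volume.restrict (Set.Icc (0:ℝ) 1)))
    -- label proportion of the bag
    (α : ((Fin k → X × Bool) × ℝ) → ℝ)
    (hα : ∀ ω, α ω = (1 / (k:ℝ)) * ∑ i, bval (ω.1 i).2)
    -- surrogate label for `x_j`: `Bernoulli(α)` given the bag
    (ytil : ((Fin k → X × Bool) × ℝ) → Bool)
    (hytil : ∀ ω, ytil ω = true ↔ ω.2 ≤ α ω)
    -- the debiased function
    (gtil : X × Bool → EuclideanSpace ℝ (Fin d))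
    (hgtil : ∀ x yt, gtil (x, yt)
        = (k : ℝ) • g (x, yt) - (((k:ℝ) - 1) * (1 - p)) • g (x, false)
          - (((k:ℝ) - 1) * p) • g (x, true)) :
    ∫ ω, gtil ((ω.1 j).1, ytil ω) ∂P = ∫ z, g z ∂D := by
  classical
  subst hP
  set μ := Measure.pi fun _ : Fin k => D with hμ
  set ν := volume.restrict (Set.Icc (0:ℝ) 1) with hν
  haveI hνP : IsProbabilityMeasure ν := ⟨by simp [hν, Real.volume_Icc]⟩
  have hκ : (k:ℝ) ≠ 0 := Nat.cast_ne_zero.mpr (by omega)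
  -- the averaged label function
  set c : (Fin k → X × Bool) → ℝ := fun b => (1 / (k:ℝ)) * ∑ i, bval ((b i).2) with hc
  have hcm : Measurable c := by
    apply Measurable.const_mul
    exact Finset.measurable_sum Finset.univ fun i _ =>
      (Measurable.of_discrete (f := bval)).comp (measurable_snd.comp (measurable_pi_apply i))
  have hc0 : ∀ b, 0 ≤ c b := by
    intro b
    apply mul_nonneg (by positivity)
    exact Finset.sum_nonneg fun i _ => by cases (b i).2 <;> simp [bval]
  have hc1 : ∀ b, c b ≤ 1 := by
    intro b
    have hSsum : ∑ i : Fin k, bval ((b i).2) ≤ (k:ℝ) := by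
      calc ∑ i : Fin k, bval ((b i).2) ≤ ∑ _i : Fin k, (1:ℝ) :=
            Finset.sum_le_sum fun i _ => by cases (b i).2 <;> simp [bval]
        _ = (k:ℝ) := by simp
    calc c b ≤ (1/(k:ℝ)) * (k:ℝ) :=
          mul_le_mul_of_nonneg_left hSsum (by positivity)
      _ = 1 := by field_simp
  -- measurability of pieces
  have hxj : Measurable fun b : Fin k → X × Bool => (b j).1 :=
    measurable_fst.comp (measurable_pi_apply j)
  have hg0 : Measurable fun z : X × Bool => g (z.1, false) :=
    hg.comp (measurable_fst.prodMk measurable_const)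
  have hg1 : Measurable fun z : X × Bool => g (z.1, true) :=
    hg.comp (measurable_fst.prodMk measurable_const)
  have hbB : StronglyMeasurable fun z : X × Bool => bval z.2 • (g (z.1, true) - g (z.1, false)) :=
    ((Measurable.of_discrete (f := bval)).comp measurable_snd).stronglyMeasurable.smul
      (hg1.sub hg0).stronglyMeasurable
  -- integrability over D
  have hbound2 : ∀ (x : X) (b : Bool), ‖bval b • (g (x, true) - g (x, false))‖ ≤ M + M := by
    intro x b
    rw [norm_smul]
    have h1 : ‖bval b‖ ≤ 1 := by cases b <;> simp [bval]
    have h2 : ‖g (x, true) - g (x, false)‖ ≤ M + M :=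
      le_trans (norm_sub_le _ _) (add_le_add (hgb _) (hgb _))
    calc ‖bval b‖ * ‖g (x, true) - g (x, false)‖ ≤ 1 * (M + M) :=
          mul_le_mul h1 h2 (norm_nonneg _) zero_le_one
      _ = M + M := one_mul _
  have hIg0 : Integrable (fun z : X × Bool => g (z.1, false)) D :=
    aux_integrable hg0.aestronglyMeasurable (fun z => hgb _)
  have hIg1 : Integrable (fun z : X × Bool => g (z.1, true)) D :=
    aux_integrable hg1.aestronglyMeasurable (fun z => hgb _)
  have hIbB : Integrable (fun z : X × Bool => bval z.2 • (g (z.1, true) - g (z.1, false))) D :=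
    aux_integrable hbB.aestronglyMeasurable (fun z => hbound2 z.1 z.2)
  set A0 := ∫ z, g (z.1, false) ∂D with hA0
  set A1 := ∫ z, g (z.1, true) ∂D with hA1
  set Bv := ∫ z, bval z.2 • (g (z.1, true) - g (z.1, false)) ∂D with hBv
  -- the right-hand side
  have hRHS : ∫ z, g z ∂D = A0 + Bv := by
    have hpt : ∀ z : X × Bool, g z
        = g (z.1, false) + bval z.2 • (g (z.1, true) - g (z.1, false)) := by
      rintro ⟨x, b⟩
      cases b <;> simp [bval]
    rw [integral_congr_ae (ae_of_all _ hpt), integral_add hIg0 hIbB]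
  -- p is the integral of bval
  have hSmeas : MeasurableSet {z : X × Bool | z.2 = true} :=
    measurable_snd (measurableSet_singleton true)
  have hpB : ∫ z, bval z.2 ∂D = p := by
    have hind : (fun z : X × Bool => bval z.2)
        = Set.indicator {z : X × Bool | z.2 = true} (fun _ => (1:ℝ)) := by
      funext z
      by_cases h : z.2 = true <;> simp [bval, h, Set.indicator]
    rw [hind, integral_indicator_const _ hSmeas, smul_eq_mul, mul_one, measureReal_def, hp]
  -- pointwise rewriting of the integrand
  have hpt1 : ∀ ω : (Fin k → X × Bool) × ℝ,
      gtil ((ω.1 j).1, ytil ω)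
        = (k:ℝ) • (if ω.2 ≤ c ω.1 then g ((ω.1 j).1, true) else g ((ω.1 j).1, false))
          - (((k:ℝ) - 1) * (1 - p)) • g ((ω.1 j).1, false)
          - (((k:ℝ) - 1) * p) • g ((ω.1 j).1, true) := by
    intro ω
    have hαc : α ω = c ω.1 := hα ω
    by_cases h : ω.2 ≤ c ω.1
    · have hy : ytil ω = true := (hytil ω).mpr (by rw [hαc]; exact h)
      rw [hy, hgtil, if_pos h]
    · have hy : ytil ω = false := by
        cases hcase : ytil ω
        · rfl
        · exact absurd (hαc ▸ (hytil ω).mp hcase) h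
      rw [hy, hgtil, if_neg h]
  -- integrability over the product measure
  have hsm1P : StronglyMeasurable fun ω : (Fin k → X × Bool) × ℝ => g ((ω.1 j).1, true) :=
    (hg.comp (((hxj.comp measurable_fst)).prodMk measurable_const)).stronglyMeasurable
  have hsm0P : StronglyMeasurable fun ω : (Fin k → X × Bool) × ℝ => g ((ω.1 j).1, false) :=
    (hg.comp (((hxj.comp measurable_fst)).prodMk measurable_const)).stronglyMeasurable
  have hFm : StronglyMeasurable fun ω : (Fin k → X × Bool) × ℝ =>
      (if ω.2 ≤ c ω.1 then g ((ω.1 j).1, true) else g ((ω.1 j).1, false)) :=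
    StronglyMeasurable.ite (measurableSet_le measurable_snd (hcm.comp measurable_fst)) hsm1P hsm0P
  have hFI : Integrable (fun ω : (Fin k → X × Bool) × ℝ =>
      (if ω.2 ≤ c ω.1 then g ((ω.1 j).1, true) else g ((ω.1 j).1, false))) (μ.prod ν) :=
    aux_integrable hFm.aestronglyMeasurable (fun ω => by split <;> exact hgb _)
  have hI0P : Integrable (fun ω : (Fin k → X × Bool) × ℝ => g ((ω.1 j).1, false)) (μ.prod ν) :=
    aux_integrable hsm0P.aestronglyMeasurable (fun ω => hgb _)
  have hI1P : Integrable (fun ω : (Fin k → X × Bool) × ℝ => g ((ω.1 j).1, true)) (μ.prod ν) :=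
    aux_integrable hsm1P.aestronglyMeasurable (fun ω => hgb _)
  -- split the integral
  rw [integral_congr_ae (ae_of_all _ hpt1)]
  have hIA : Integrable (fun ω : (Fin k → X × Bool) × ℝ =>
      (k:ℝ) • (if ω.2 ≤ c ω.1 then g ((ω.1 j).1, true) else g ((ω.1 j).1, false))) (μ.prod ν) :=
    hFI.smul ((k:ℝ))
  have hIB0 : Integrable (fun ω : (Fin k → X × Bool) × ℝ =>
      (((k:ℝ) - 1) * (1 - p)) • g ((ω.1 j).1, false)) (μ.prod ν) :=
    hI0P.smul (((k:ℝ) - 1) * (1 - p))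
  have hIB1 : Integrable (fun ω : (Fin k → X × Bool) × ℝ =>
      (((k:ℝ) - 1) * p) • g ((ω.1 j).1, true)) (μ.prod ν) :=
    hI1P.smul (((k:ℝ) - 1) * p)
  have hIAB : Integrable (fun ω : (Fin k → X × Bool) × ℝ =>
      (k:ℝ) • (if ω.2 ≤ c ω.1 then g ((ω.1 j).1, true) else g ((ω.1 j).1, false))
        - (((k:ℝ) - 1) * (1 - p)) • g ((ω.1 j).1, false)) (μ.prod ν) := hIA.sub hIB0
  rw [integral_sub hIAB hIB1, integral_sub hIA hIB0,
    integral_smul, integral_smul, integral_smul]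
  -- marginal integrals of the simple pieces
  have hmarg0 : ∫ ω : (Fin k → X × Bool) × ℝ, g ((ω.1 j).1, false) ∂(μ.prod ν) = A0 := by
    rw [integral_fun_fst (fun b : Fin k → X × Bool => g ((b j).1, false))]
    rw [probReal_univ, one_smul]
    exact integral_eval_pi D j (f := fun z : X × Bool => g (z.1, false)) hg0.aestronglyMeasurable
  have hmarg1 : ∫ ω : (Fin k → X × Bool) × ℝ, g ((ω.1 j).1, true) ∂(μ.prod ν) = A1 := by
    rw [integral_fun_fst (fun b : Fin k → X × Bool => g ((b j).1, true))]
    rw [probReal_univ, one_smul]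
    exact integral_eval_pi D j (f := fun z : X × Bool => g (z.1, true)) hg1.aestronglyMeasurable
  -- compute the main (Fubini) term
  have hinner : ∀ b : Fin k → X × Bool,
      (∫ u, (if u ≤ c b then g ((b j).1, true) else g ((b j).1, false)) ∂ν)
        = g ((b j).1, false)
          + (1/(k:ℝ)) • ∑ i, bval ((b i).2) • (g ((b j).1, true) - g ((b j).1, false)) := by
    intro b
    rw [hν]
    rw [inner_int (hc0 b) (hc1 b)]
    rw [scalar_combine]
    congr 1
    rw [← Finset.sum_smul, smul_smul]
  have hTint : ∀ i : Fin k, Integrable (fun b : Fin k → X × Bool =>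
      bval ((b i).2) • (g ((b j).1, true) - g ((b j).1, false))) μ := by
    intro i
    refine aux_integrable ?_ (fun b => hbound2 (b j).1 ((b i).2))
    exact (((Measurable.of_discrete (f := bval)).comp
        (measurable_snd.comp (measurable_pi_apply i))).stronglyMeasurable.smul
      ((hg.comp (hxj.prodMk measurable_const)).stronglyMeasurable.sub
        (hg.comp (hxj.prodMk measurable_const)).stronglyMeasurable)).aestronglyMeasurable
  have hIg0μ : Integrable (fun b : Fin k → X × Bool => g ((b j).1, false)) μ :=
    aux_integrable (hg.comp (hxj.prodMk measurable_const)).aestronglyMeasurable (fun b => hgb _)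
  have hTval : ∀ i : Fin k,
      (∫ b, bval ((b i).2) • (g ((b j).1, true) - g ((b j).1, false)) ∂μ)
        = if i = j then Bv else p • (A1 - A0) := by
    intro i
    by_cases hij : i = j
    · subst hij
      rw [if_pos rfl]
      exact integral_eval_pi D i
        (f := fun z : X × Bool => bval z.2 • (g (z.1, true) - g (z.1, false)))
        hbB.aestronglyMeasurable
    · rw [if_neg hij]
      have hpm : AEStronglyMeasurable
          (fun z : (X × Bool) × (X × Bool) => bval z.1.2 • (g (z.2.1, true) - g (z.2.1, false)))
          (D.prod D) :=
        (((Measurable.of_discrete (f := bval)).comp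
            (measurable_snd.comp measurable_fst)).stronglyMeasurable.smul
          (((hg.comp ((measurable_fst.comp measurable_snd).prodMk measurable_const))).stronglyMeasurable.sub
            ((hg.comp ((measurable_fst.comp measurable_snd).prodMk measurable_const))).stronglyMeasurable)).aestronglyMeasurable
      rw [integral_pair_pi D hij
        (f := fun z : (X × Bool) × (X × Bool) => bval z.1.2 • (g (z.2.1, true) - g (z.2.1, false)))
        hpm]
      rw [integral_prod_smul (𝕜 := ℝ) (fun z : X × Bool => bval z.2)
        (fun z : X × Bool => g (z.1, true) - g (z.1, false))]
      rw [hpB, integral_sub hIg1 hIg0]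
  have hKey : ∫ ω : (Fin k → X × Bool) × ℝ,
      (if ω.2 ≤ c ω.1 then g ((ω.1 j).1, true) else g ((ω.1 j).1, false)) ∂(μ.prod ν)
      = A0 + (1/(k:ℝ)) • ((k:ℝ) • (p • (A1 - A0)) + (Bv - p • (A1 - A0))) := by
    rw [integral_prod _ hFI]
    rw [integral_congr_ae (ae_of_all _ hinner)]
    have hIsum : Integrable (fun b : Fin k → X × Bool =>
        (1/(k:ℝ)) • ∑ i, bval ((b i).2) • (g ((b j).1, true) - g ((b j).1, false))) μ :=
      (integrable_finset_sum _ fun i _ => hTint i).smul ((1:ℝ)/(k:ℝ))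
    rw [integral_add hIg0μ hIsum]
    rw [integral_smul, integral_finset_sum _ (fun i _ => hTint i)]
    have hA0μ : ∫ b, g ((b j).1, false) ∂μ = A0 :=
      integral_eval_pi D j (f := fun z : X × Bool => g (z.1, false)) hg0.aestronglyMeasurable
    rw [hA0μ]
    congr 1
    congr 1
    rw [Finset.sum_congr rfl (fun i _ => hTval i)]
    have hsplit : ∀ i : Fin k, (if i = j then Bv else p • (A1 - A0))
        = p • (A1 - A0) + (if i = j then Bv - p • (A1 - A0) else 0) := by
      intro i
      by_cases h : i = j <;> simp [h]
    rw [Finset.sum_congr rfl (fun i _ => hsplit i), Finset.sum_add_distrib,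
      Finset.sum_const, Finset.sum_ite_eq' Finset.univ j, if_pos (Finset.mem_univ j)]
    rw [Finset.card_univ, Fintype.card_fin, ← Nat.cast_smul_eq_nsmul ℝ]
  rw [hKey, hmarg0, hmarg1, hRHS]
  rw [smul_add, smul_smul, mul_one_div, div_self hκ, one_smul]
  module
end
end

section
/- Let (x_1,y_1),...,(x_k,y_k) be drawn i.i.d. from D, let α = (1/k)·Σ_{i=1}^k y_i, and let ỹ_1,...,ỹ_k be drawn, conditionally on the bag, i.i.d. from Bernoulli(α). For any bounded measurable g : X × {0,1} → ℝ^d, with g̃(x, ỹ) = (k(ỹ − p) + p)·g(x, 1) + (k(p − ỹ) + (1 − p))·g(x, 0) and the soft label corrected function g̃(x, α) = (k(α − p) + p)·g(x, 1) + (k(p − α) + (1 − p))·g(x, 0), the following inequality holds: E[ ‖(1/k)·Σ_{j=1}^k g̃(x_j, ỹ_j)‖² ] ≥ E[ ‖(1/k)·Σ_{j=1}^k g̃(x_j, α)‖² ]. -/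
open MeasureTheory Real

noncomputable section

lemma jensen_norm_sq {E : Type*} [NormedAddCommGroup E] [NormedSpace ℝ E]
    {Ω : Type*} [MeasurableSpace Ω] (ν : Measure Ω) [IsProbabilityMeasure ν]
    (f : Ω → E) (hf : AEStronglyMeasurable f ν) (C : ℝ) (hC : ∀ ω, ‖f ω‖ ≤ C) :
    ‖∫ ω, f ω ∂ν‖ ^ 2 ≤ ∫ ω, ‖f ω‖ ^ 2 ∂ν := by
  have hmem : MemLp f 2 ν := MemLp.of_bound hf C (Filter.Eventually.of_forall hC)
  have hmem' : MemLp (fun ω => ‖f ω‖) 2 ν := hmem.norm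
  have h1 : ‖∫ ω, f ω ∂ν‖ ≤ ∫ ω, ‖f ω‖ ∂ν := norm_integral_le_integral_norm f
  have h2 : (∫ ω, ‖f ω‖ ∂ν) ^ 2 ≤ ∫ ω, ‖f ω‖ ^ 2 ∂ν := by
    have hv := ProbabilityTheory.variance_nonneg (fun ω => ‖f ω‖) ν
    rw [ProbabilityTheory.variance_eq_sub hmem'] at hv
    simp only [Pi.pow_apply] at hv
    linarith
  calc ‖∫ ω, f ω ∂ν‖ ^ 2 ≤ (∫ ω, ‖f ω‖ ∂ν) ^ 2 :=
        pow_le_pow_left₀ (norm_nonneg _) h1 2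
    _ ≤ _ := h2

set_option maxHeartbeats 2000000 in
/-- Lemma 1, variance reduction by derandomization.
The surrogate labels `ỹ_1,…,ỹ_k` are, conditionally on the bag, i.i.d.
`Bernoulli(α)`, realized as `ỹ_j = 1{U_j ≤ α}` with `U_1,…,U_k` i.i.d. uniform on
`[0,1]` independent of the bag. With
`g̃(x,t) = (k(t−p)+p)·g(x,1) + (k(p−t)+(1−p))·g(x,0)`,
`E‖(1/k)Σ_j g̃(x_j,ỹ_j)‖² ≥ E‖(1/k)Σ_j g̃(x_j,α)‖²`. -/
theorem stmt_4
    {X : Type*} [MeasurableSpace X] {d : ℕ}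
    (D : Measure (X × Bool)) [IsProbabilityMeasure D]
    (p : ℝ) (hp : p = (D {z : X × Bool | z.2 = true}).toReal)
    (k : ℕ) (hk : 1 ≤ k)
    (g : X × Bool → EuclideanSpace ℝ (Fin d)) (hg : Measurable g)
    (M : ℝ) (hgb : ∀ z, ‖g z‖ ≤ M)
    -- probability space: the bag together with `k` independent uniform variables
    (P : Measure ((Fin k → X × Bool) × (Fin k → ℝ)))
    (hP : P = (Measure.pi fun _ : Fin k => D).prod
        (Measure.pi fun _ : Fin k => volume.restrict (Set.Icc (0:ℝ) 1)))
    -- label proportion of the bag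
    (α : (Fin k → X × Bool) → ℝ)
    (hα : ∀ b, α b = (1 / (k:ℝ)) * ∑ i, bval (b i).2)
    -- surrogate labels, i.i.d. `Bernoulli(α)` given the bag
    (ytil : Fin k → ((Fin k → X × Bool) × (Fin k → ℝ)) → Bool)
    (hytil : ∀ j ω, ytil j ω = true ↔ ω.2 j ≤ α ω.1)
    -- the debiased / soft label corrected function
    (gtil : X → ℝ → EuclideanSpace ℝ (Fin d))
    (hgtil : ∀ x t, gtil x t
        = ((k:ℝ) * (t - p) + p) • g (x, true)
          + ((k:ℝ) * (p - t) + (1 - p)) • g (x, false)) :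
    ∫ ω, ‖(1 / (k:ℝ)) • ∑ j, gtil (ω.1 j).1 (bval (ytil j ω))‖ ^ 2 ∂P
      ≥ ∫ ω, ‖(1 / (k:ℝ)) • ∑ j, gtil (ω.1 j).1 (α ω.1)‖ ^ 2 ∂P := by
  subst hP
  haveI hprob1 : IsProbabilityMeasure (volume.restrict (Set.Icc (0:ℝ) 1)) :=
    ⟨by simp [Real.volume_Icc]⟩
  set μD := Measure.pi fun _ : Fin k => D with hμD
  set μU := Measure.pi fun _ : Fin k => volume.restrict (Set.Icc (0:ℝ) 1) with hμU
  -- basic facts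
  have hk0 : (0:ℝ) < k := by exact_mod_cast hk
  have hp0 : 0 ≤ p := hp ▸ ENNReal.toReal_nonneg
  have hp1 : p ≤ 1 := by
    rw [hp]
    have h : D {z : X × Bool | z.2 = true} ≤ 1 := prob_le_one
    have h2 := ENNReal.toReal_mono (by norm_num : (1:ENNReal) ≠ ⊤) h
    simpa using h2
  have hne : Nonempty (X × Bool) := by
    by_contra h
    have h1 : (Set.univ : Set (X × Bool)) = ∅ := Set.univ_eq_empty_iff.mpr (not_nonempty_iff.mp h)
    have h2 := measure_univ (μ := D)
    rw [h1] at h2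
    simp at h2
  have hM : 0 ≤ M := le_trans (norm_nonneg _) (hgb hne.some)
  -- α range
  have hα01 : ∀ b, α b ∈ Set.Icc (0:ℝ) 1 := by
    intro b
    rw [hα b]
    constructor
    · apply mul_nonneg (by positivity)
      apply Finset.sum_nonneg
      intro i _
      cases h : (b i).2 <;> simp [bval]
    · have hsum : ∑ i, bval (b i).2 ≤ (k:ℝ) := by
        calc ∑ i, bval (b i).2 ≤ ∑ _i : Fin k, (1:ℝ) := by
              apply Finset.sum_le_sum
              intro i _
              cases h : (b i).2 <;> simp [bval]
          _ = (k:ℝ) := by simp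
      rw [one_div, inv_mul_le_iff₀ hk0, mul_one]
      exact hsum
  -- gtil bound
  set C : ℝ := 2 * ((k:ℝ) + 1) * M with hCdef
  have hC0 : 0 ≤ C := by positivity
  have hGb : ∀ (x : X) (t : ℝ), t ∈ Set.Icc (0:ℝ) 1 → ‖gtil x t‖ ≤ C := by
    intro x t ht
    rw [hgtil]
    have h1 : |(k:ℝ) * (t - p) + p| ≤ (k:ℝ) + 1 := by
      have : |t - p| ≤ 1 := by
        rw [abs_le]; constructor <;> [linarith [ht.1]; linarith [ht.2]]
      calc |(k:ℝ) * (t - p) + p| ≤ |(k:ℝ) * (t - p)| + |p| := abs_add_le _ _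
        _ = (k:ℝ) * |t - p| + |p| := by rw [abs_mul, abs_of_nonneg (le_of_lt hk0)]
        _ ≤ (k:ℝ) * 1 + 1 := by
            have : |p| ≤ 1 := abs_le.mpr ⟨by linarith, hp1⟩
            nlinarith
        _ = (k:ℝ) + 1 := by ring
    have h2 : |(k:ℝ) * (p - t) + (1 - p)| ≤ (k:ℝ) + 1 := by
      have : |p - t| ≤ 1 := by
        rw [abs_le]; constructor <;> [linarith [ht.2]; linarith [ht.1]]
      calc |(k:ℝ) * (p - t) + (1 - p)| ≤ |(k:ℝ) * (p - t)| + |1 - p| := abs_add_le _ _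
        _ = (k:ℝ) * |p - t| + |1 - p| := by rw [abs_mul, abs_of_nonneg (le_of_lt hk0)]
        _ ≤ (k:ℝ) * 1 + 1 := by
            have : |1 - p| ≤ 1 := abs_le.mpr ⟨by linarith, by linarith⟩
            nlinarith
        _ = (k:ℝ) + 1 := by ring
    calc ‖((k:ℝ) * (t - p) + p) • g (x, true) + ((k:ℝ) * (p - t) + (1 - p)) • g (x, false)‖
        ≤ ‖((k:ℝ) * (t - p) + p) • g (x, true)‖ + ‖((k:ℝ) * (p - t) + (1 - p)) • g (x, false)‖ :=
          norm_add_le _ _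
      _ = |(k:ℝ) * (t - p) + p| * ‖g (x, true)‖ + |(k:ℝ) * (p - t) + (1 - p)| * ‖g (x, false)‖ := by
          rw [norm_smul, norm_smul, Real.norm_eq_abs, Real.norm_eq_abs]
      _ ≤ ((k:ℝ) + 1) * M + ((k:ℝ) + 1) * M := by
          apply add_le_add
          · exact mul_le_mul h1 (hgb _) (norm_nonneg _) (by linarith)
          · exact mul_le_mul h2 (hgb _) (norm_nonneg _) (by linarith)
      _ = C := by rw [hCdef]; ring
  -- bound for averaged sums
  have hsum_bound : ∀ (b : Fin k → X × Bool) (t : Fin k → ℝ), (∀ j, t j ∈ Set.Icc (0:ℝ) 1) →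
      ‖(1 / (k:ℝ)) • ∑ j, gtil (b j).1 (t j)‖ ≤ C := by
    intro b t ht
    calc ‖(1 / (k:ℝ)) • ∑ j, gtil (b j).1 (t j)‖
        = (1 / (k:ℝ)) * ‖∑ j, gtil (b j).1 (t j)‖ := by
          rw [norm_smul, Real.norm_eq_abs, abs_of_nonneg (by positivity)]
      _ ≤ (1 / (k:ℝ)) * ∑ j, ‖gtil (b j).1 (t j)‖ := by
          apply mul_le_mul_of_nonneg_left (norm_sum_le _ _) (by positivity)
      _ ≤ (1 / (k:ℝ)) * ∑ _j : Fin k, C := by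
          apply mul_le_mul_of_nonneg_left _ (by positivity)
          exact Finset.sum_le_sum (fun j _ => hGb _ _ (ht j))
      _ = C := by
          simp only [Finset.sum_const, Finset.card_univ, Fintype.card_fin, nsmul_eq_mul]
          field_simp
  -- measurability
  have hαm : Measurable α := by
    have : α = fun b => (1 / (k:ℝ)) * ∑ i, bval (b i).2 := funext hα
    rw [this]
    apply Measurable.const_mul
    apply Finset.measurable_sum
    intro i _
    exact (measurable_of_countable bval).comp ((measurable_pi_apply i).snd)
  have hgtilm : Measurable (fun q : X × ℝ => gtil q.1 q.2) := by
    have : (fun q : X × ℝ => gtil q.1 q.2)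
        = fun q => ((k:ℝ) * (q.2 - p) + p) • g (q.1, true)
            + ((k:ℝ) * (p - q.2) + (1 - p)) • g (q.1, false) := by
      funext q; exact hgtil q.1 q.2
    rw [this]
    apply Measurable.add
    · exact (((measurable_snd.sub measurable_const).const_mul _).add measurable_const).smul
        (hg.comp (measurable_fst.prodMk measurable_const))
    · exact (((measurable_const.sub measurable_snd).const_mul _).add measurable_const).smul
        (hg.comp (measurable_fst.prodMk measurable_const))
  -- rewrite ytil via indicator
  have hy : ∀ j (ω : (Fin k → X × Bool) × (Fin k → ℝ)),
      bval (ytil j ω) = if ω.2 j ≤ α ω.1 then (1:ℝ) else 0 := by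
    intro j ω
    by_cases h : ω.2 j ≤ α ω.1
    · rw [(hytil j ω).mpr h]; simp [bval, h]
    · have hf : ytil j ω = false := by
        cases hc : ytil j ω
        · rfl
        · exact absurd ((hytil j ω).mp hc) h
      rw [hf]; simp [bval, h]
  simp only [hy]
  -- measurability of the two integrands
  have hZm : Measurable (fun ω : (Fin k → X × Bool) × (Fin k → ℝ) =>
      (1 / (k:ℝ)) • ∑ j, gtil (ω.1 j).1 (if ω.2 j ≤ α ω.1 then (1:ℝ) else 0)) := by
    apply Measurable.fun_const_smul
    apply Finset.measurable_sum
    intro j _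
    have hpair : Measurable (fun ω : (Fin k → X × Bool) × (Fin k → ℝ) =>
        (((ω.1 j).1, if ω.2 j ≤ α ω.1 then (1:ℝ) else 0) : X × ℝ)) := by
      apply Measurable.prodMk
      · exact ((measurable_pi_apply j).comp measurable_fst).fst
      · exact Measurable.ite
          (measurableSet_le (show Measurable fun ω : (Fin k → X × Bool) × (Fin k → ℝ) => ω.2 j from
            (measurable_pi_apply j).comp measurable_snd) (hαm.comp measurable_fst))
          measurable_const measurable_const
    exact hgtilm.comp hpair
  have hWm : Measurable (fun b : Fin k → X × Bool =>
      (1 / (k:ℝ)) • ∑ j, gtil (b j).1 (α b)) := by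
    apply Measurable.fun_const_smul
    apply Finset.measurable_sum
    intro j _
    exact hgtilm.comp ((measurable_pi_apply j).fst.prodMk hαm)
  -- integrability on the product
  have hint1 : Integrable (fun ω : (Fin k → X × Bool) × (Fin k → ℝ) =>
      ‖(1 / (k:ℝ)) • ∑ j, gtil (ω.1 j).1 (if ω.2 j ≤ α ω.1 then (1:ℝ) else 0)‖ ^ 2)
      (μD.prod μU) := by
    apply Integrable.mono' (integrable_const (C ^ 2))
      ((hZm.norm.pow_const 2).aestronglyMeasurable)
    filter_upwards with ω
    rw [Real.norm_eq_abs, abs_of_nonneg (by positivity)]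
    apply pow_le_pow_left₀ (norm_nonneg _) _ 2
    apply hsum_bound
    intro j
    split_ifs <;> simp
  have hint2 : Integrable (fun ω : (Fin k → X × Bool) × (Fin k → ℝ) =>
      ‖(1 / (k:ℝ)) • ∑ j, gtil (ω.1 j).1 (α ω.1)‖ ^ 2) (μD.prod μU) := by
    apply Integrable.mono' (integrable_const (C ^ 2))
      (((hWm.comp measurable_fst).norm.pow_const 2).aestronglyMeasurable)
    filter_upwards with ω
    rw [Real.norm_eq_abs, abs_of_nonneg (by positivity)]
    apply pow_le_pow_left₀ (norm_nonneg _) _ 2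
    exact hsum_bound _ _ (fun j => hα01 ω.1)
  rw [ge_iff_le, integral_prod _ hint2, integral_prod _ hint1]
  -- LHS: inner integral is constant
  have hconst : ∀ b : Fin k → X × Bool,
      (∫ _u : Fin k → ℝ, ‖(1 / (k:ℝ)) • ∑ j, gtil (b j).1 (α b)‖ ^ 2 ∂μU)
        = ‖(1 / (k:ℝ)) • ∑ j, gtil (b j).1 (α b)‖ ^ 2 := by
    intro b
    simp [integral_const]
  simp only [hconst]
  apply integral_mono
  · -- integrability of RHS-of-≤'s... the W side
    apply Integrable.mono' (integrable_const (C ^ 2)) ((hWm.norm.pow_const 2).aestronglyMeasurable)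
    filter_upwards with b
    rw [Real.norm_eq_abs, abs_of_nonneg (by positivity)]
    apply pow_le_pow_left₀ (norm_nonneg _) _ 2
    exact hsum_bound _ _ (fun j => hα01 b)
  · exact hint1.integral_prod_left
  -- pointwise Jensen
  intro b
  set a := α b with hadef
  have ha := hα01 b
  set F : (Fin k → ℝ) → EuclideanSpace ℝ (Fin d) :=
    fun u => (1 / (k:ℝ)) • ∑ j, gtil (b j).1 (if u j ≤ a then (1:ℝ) else 0) with hF
  have hFm : Measurable F := by
    apply Measurable.fun_const_smul
    apply Finset.measurable_sum
    intro j _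
    have hpair : Measurable (fun u : Fin k → ℝ =>
        (((b j).1, if u j ≤ a then (1:ℝ) else 0) : X × ℝ)) := by
      apply Measurable.prodMk measurable_const
      exact Measurable.ite (measurableSet_le (measurable_pi_apply j) measurable_const)
        measurable_const measurable_const
    exact hgtilm.comp hpair
  have hFb : ∀ u, ‖F u‖ ≤ C := by
    intro u
    exact hsum_bound b _ (fun j => by split_ifs <;> simp)
  -- the key identity: the mean of F is the soft-label value
  have hintj : ∀ j : Fin k, Integrable
      (fun u : Fin k → ℝ => gtil (b j).1 (if u j ≤ a then (1:ℝ) else 0)) μU := by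
    intro j
    have hpair : Measurable (fun u : Fin k → ℝ =>
        (((b j).1, if u j ≤ a then (1:ℝ) else 0) : X × ℝ)) := by
      apply Measurable.prodMk measurable_const
      exact Measurable.ite (measurableSet_le (measurable_pi_apply j) measurable_const)
        measurable_const measurable_const
    apply Integrable.mono' (integrable_const C) (hgtilm.comp hpair).aestronglyMeasurable
    filter_upwards with u
    exact hGb _ _ (by dsimp only; split_ifs <;> simp)
  have hsingle : ∀ j : Fin k,
      ∫ u, gtil (b j).1 (if u j ≤ a then (1:ℝ) else 0) ∂μU = gtil (b j).1 a := by
    intro j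
    have hsetm : MeasurableSet {u : Fin k → ℝ | u j ≤ a} :=
      measurableSet_le (measurable_pi_apply j) measurable_const
    have hfeq : (fun u : Fin k → ℝ => gtil (b j).1 (if u j ≤ a then (1:ℝ) else 0))
        = fun u => Set.indicator {u : Fin k → ℝ | u j ≤ a}
            (fun _ => gtil (b j).1 1 - gtil (b j).1 0) u + gtil (b j).1 0 := by
      funext u
      by_cases h : u j ≤ a
      · rw [Set.indicator_of_mem (show u ∈ {u : Fin k → ℝ | u j ≤ a} from h)]
        simp only [if_pos h]
        abel
      · rw [Set.indicator_of_notMem (show u ∉ {u : Fin k → ℝ | u j ≤ a} from h)]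
        simp [h]
    have hmeasA : μU {u : Fin k → ℝ | u j ≤ a} = ENNReal.ofReal a := by
      have hsetpi : {u : Fin k → ℝ | u j ≤ a}
          = Set.pi Set.univ (Function.update (fun _ : Fin k => (Set.univ : Set ℝ)) j (Set.Iic a)) := by
        rw [show {u : Fin k → ℝ | u j ≤ a} = Function.eval j ⁻¹' Set.Iic a from rfl,
          Set.eval_preimage]
      have hIcc : Set.Iic a ∩ Set.Icc (0:ℝ) 1 = Set.Icc 0 a := by
        ext x
        simp only [Set.mem_inter_iff, Set.mem_Iic, Set.mem_Icc]
        constructor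
        · rintro ⟨h1, h2, h3⟩
          exact ⟨h2, h1⟩
        · rintro ⟨h1, h2⟩
          exact ⟨h2, h1, le_trans h2 ha.2⟩
      rw [hsetpi, hμU, Measure.pi_pi]
      rw [Finset.prod_eq_single_of_mem j (Finset.mem_univ j)
        (fun i _ hij => by rw [Function.update_of_ne hij]; exact measure_univ),
        Function.update_self]
      rw [Measure.restrict_apply measurableSet_Iic, hIcc, Real.volume_Icc, sub_zero]
    rw [hfeq, integral_add ((integrable_const _).indicator hsetm) (integrable_const _),
      integral_indicator_const _ hsetm, integral_const, measureReal_def, hmeasA,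
      ENNReal.toReal_ofReal ha.1, measureReal_def, measure_univ, ENNReal.toReal_one, one_smul,
      hgtil (b j).1 1, hgtil (b j).1 0, hgtil (b j).1 a]
    module
  have hkey : ∫ u, F u ∂μU = (1 / (k:ℝ)) • ∑ j, gtil (b j).1 a := by
    rw [hF]
    rw [integral_smul, integral_finset_sum _ (fun j _ => hintj j)]
    congr 1
    exact Finset.sum_congr rfl (fun j _ => hsingle j)
  have hjen := jensen_norm_sq μU F hFm.aestronglyMeasurable C hFb
  rw [hkey] at hjen
  exact hjen

end
end

section
/- Let (x_1,y_1),...,(x_k,y_k) be drawn i.i.d. from D, let α = (1/k)·Σ_{i=1}^k y_i, let g : X × {0,1} → ℝ^d be bounded measurable, and write g̃_i = g̃(x_i, α) where g̃(x, α) = (k(α − p) + p)·g(x, 1) + (k(p − α) + (1 − p))·g(x, 0). Then for any k ≥ 1 and any j ∈ [k], E[ ‖(1/k)·Σ_{i=1}^k g̃_i‖² ] ≤ E[ ‖g̃_j‖² ]. -/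
open MeasureTheory Real

noncomputable section

/-- Lemma: the bag average has smaller second moment than a
single soft-label corrected term. With `g̃_i = g̃(x_i, α)`, for any `k ≥ 1` and
`j ∈ [k]`, `E‖(1/k)Σ_i g̃_i‖² ≤ E‖g̃_j‖²`. -/
theorem stmt_5
    {X : Type*} [MeasurableSpace X] {d : ℕ}
    (D : Measure (X × Bool)) [IsProbabilityMeasure D]
    (p : ℝ) (hp : p = (D {z : X × Bool | z.2 = true}).toReal)
    (k : ℕ) (hk : 1 ≤ k) (j : Fin k)
    (g : X × Bool → EuclideanSpace ℝ (Fin d)) (hg : Measurable g)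
    (M : ℝ) (hgb : ∀ z, ‖g z‖ ≤ M)
    -- label proportion of the bag
    (α : (Fin k → X × Bool) → ℝ)
    (hα : ∀ ω, α ω = (1 / (k:ℝ)) * ∑ i, bval (ω i).2)
    -- the soft label corrected function
    (gtil : X → ℝ → EuclideanSpace ℝ (Fin d))
    (hgtil : ∀ x a, gtil x a
        = ((k:ℝ) * (a - p) + p) • g (x, true)
          + ((k:ℝ) * (p - a) + (1 - p)) • g (x, false)) :
    ∫ ω, ‖(1 / (k:ℝ)) • ∑ i, gtil (ω i).1 (α ω)‖ ^ 2
        ∂(Measure.pi fun _ : Fin k => D)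
      ≤ ∫ ω, ‖gtil (ω j).1 (α ω)‖ ^ 2 ∂(Measure.pi fun _ : Fin k => D) := by
  set Pr : Measure (Fin k → X × Bool) := Measure.pi fun _ : Fin k => D with hPr
  have hkpos : (0:ℝ) < k := by exact_mod_cast hk
  have hk0 : (k:ℝ) ≠ 0 := ne_of_gt hkpos
  -- measurability of α
  have hαm : Measurable α := by
    have : Measurable fun ω : Fin k → X × Bool => (1 / (k:ℝ)) * ∑ i, bval (ω i).2 := by
      refine Measurable.const_mul ?_ _
      exact Finset.measurable_sum _ fun i _ =>
        (Measurable.of_discrete (f := bval)).comp ((measurable_pi_apply i).snd)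
    have hfun : α = fun ω => (1 / (k:ℝ)) * ∑ i, bval (ω i).2 := funext hα
    rw [hfun]; exact this
  -- α is in [0, 1]
  have hα0 : ∀ ω, 0 ≤ α ω := by
    intro ω; rw [hα]
    have h : ∀ i : Fin k, (0:ℝ) ≤ bval (ω i).2 := fun i => by
      by_cases hb : (ω i).2 <;> simp [bval, hb]
    exact mul_nonneg (by positivity) (Finset.sum_nonneg fun i _ => h i)
  have hα1 : ∀ ω, α ω ≤ 1 := by
    intro ω; rw [hα]
    have hsum : ∑ i, bval (ω i).2 ≤ (k:ℝ) := by
      calc ∑ i, bval (ω i).2 ≤ ∑ _i : Fin k, (1:ℝ) :=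
            Finset.sum_le_sum fun i _ => by
              by_cases hb : (ω i).2 <;> simp [bval, hb]
        _ = (k:ℝ) := by simp
    calc (1 / (k:ℝ)) * ∑ i, bval (ω i).2 ≤ (1 / (k:ℝ)) * (k:ℝ) :=
          mul_le_mul_of_nonneg_left hsum (by positivity)
      _ = 1 := by field_simp
  -- uniform bound on gtil
  set C : ℝ := (2 * (k:ℝ) * (1 + |p|) + 1 + 2 * |p|) * |M| with hC
  have hCb : ∀ (x : X) (a : ℝ), 0 ≤ a → a ≤ 1 → ‖gtil x a‖ ≤ C := by
    intro x a ha0 ha1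
    rw [hgtil]
    have h1 : |(k:ℝ) * (a - p) + p| ≤ (k:ℝ) * (1 + |p|) + |p| := by
      have hap : |a - p| ≤ 1 + |p| := by
        rw [abs_le]
        constructor <;> [skip; skip] <;>
          nlinarith [le_abs_self p, neg_abs_le p]
      calc |(k:ℝ) * (a - p) + p| ≤ |(k:ℝ) * (a - p)| + |p| := abs_add_le _ _
        _ = (k:ℝ) * |a - p| + |p| := by
            rw [abs_mul, abs_of_nonneg (le_of_lt hkpos)]
        _ ≤ (k:ℝ) * (1 + |p|) + |p| := by gcongr
    have h2 : |(k:ℝ) * (p - a) + (1 - p)| ≤ (k:ℝ) * (1 + |p|) + (1 + |p|) := by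
      have hap : |p - a| ≤ 1 + |p| := by
        rw [abs_le]
        constructor <;> nlinarith [le_abs_self p, neg_abs_le p]
      have h1p : |1 - p| ≤ 1 + |p| := by
        rw [abs_le]
        constructor <;> nlinarith [le_abs_self p, neg_abs_le p]
      calc |(k:ℝ) * (p - a) + (1 - p)| ≤ |(k:ℝ) * (p - a)| + |1 - p| := abs_add_le _ _
        _ = (k:ℝ) * |p - a| + |1 - p| := by
            rw [abs_mul, abs_of_nonneg (le_of_lt hkpos)]
        _ ≤ (k:ℝ) * (1 + |p|) + (1 + |p|) := by gcongr
    have hgM : ∀ z : X × Bool, ‖g z‖ ≤ |M| := fun z => (hgb z).trans (le_abs_self M)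
    calc ‖((k:ℝ) * (a - p) + p) • g (x, true)
            + ((k:ℝ) * (p - a) + (1 - p)) • g (x, false)‖
        ≤ ‖((k:ℝ) * (a - p) + p) • g (x, true)‖
            + ‖((k:ℝ) * (p - a) + (1 - p)) • g (x, false)‖ := norm_add_le _ _
      _ = |(k:ℝ) * (a - p) + p| * ‖g (x, true)‖
            + |(k:ℝ) * (p - a) + (1 - p)| * ‖g (x, false)‖ := by
            rw [norm_smul, norm_smul, Real.norm_eq_abs, Real.norm_eq_abs]
      _ ≤ ((k:ℝ) * (1 + |p|) + |p|) * |M|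
            + ((k:ℝ) * (1 + |p|) + (1 + |p|)) * |M| := by
            gcongr <;> first
              | exact abs_nonneg _
              | exact hgM _
              | exact (norm_nonneg _).trans (hgM _)
      _ = C := by rw [hC]; ring
  have hC0 : 0 ≤ C := by positivity
  -- measurability of each term
  have hgt : ∀ i : Fin k, Measurable fun ω : Fin k → X × Bool => gtil (ω i).1 (α ω) := by
    intro i
    have h1 : Measurable fun ω : Fin k → X × Bool => (ω i).1 :=
      (measurable_pi_apply i).fst
    have hfun : (fun ω : Fin k → X × Bool => gtil (ω i).1 (α ω))
        = fun ω => ((k:ℝ) * (α ω - p) + p) • g ((ω i).1, true)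
          + ((k:ℝ) * (p - α ω) + (1 - p)) • g ((ω i).1, false) := by
      funext ω; rw [hgtil]
    rw [hfun]
    refine Measurable.add ?_ ?_
    · exact (((hαm.sub measurable_const).const_mul _).add_const _).smul
        (hg.comp (h1.prodMk measurable_const))
    · exact (((measurable_const.sub hαm).const_mul _).add_const _).smul
        (hg.comp (h1.prodMk measurable_const))
  have hgtb : ∀ (i : Fin k) (ω : Fin k → X × Bool), ‖gtil (ω i).1 (α ω)‖ ≤ C :=
    fun i ω => hCb _ _ (hα0 ω) (hα1 ω)
  -- integrability of each squared term
  have hFint : ∀ i : Fin k,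
      Integrable (fun ω => ‖gtil (ω i).1 (α ω)‖ ^ 2) Pr := by
    intro i
    refine Integrable.mono' (integrable_const (C ^ 2))
      (((hgt i).norm.pow_const 2).aestronglyMeasurable) (ae_of_all _ fun ω => ?_)
    rw [Real.norm_eq_abs, abs_of_nonneg (by positivity)]
    exact pow_le_pow_left₀ (norm_nonneg _) (hgtb i ω) 2
  -- integrability of the LHS integrand
  have hHm : Measurable fun ω : Fin k → X × Bool =>
      ‖(1 / (k:ℝ)) • ∑ i, gtil (ω i).1 (α ω)‖ ^ 2 := by
    refine Measurable.pow_const (Measurable.norm ?_) 2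
    exact Measurable.const_smul (Finset.measurable_sum Finset.univ fun i _ => hgt i) (1 / (k:ℝ))
  have hHb : ∀ ω : Fin k → X × Bool,
      ‖(1 / (k:ℝ)) • ∑ i, gtil (ω i).1 (α ω)‖ ≤ C := by
    intro ω
    rw [norm_smul, Real.norm_eq_abs, abs_of_pos (by positivity)]
    calc (1 / (k:ℝ)) * ‖∑ i, gtil (ω i).1 (α ω)‖
        ≤ (1 / (k:ℝ)) * ∑ i, ‖gtil (ω i).1 (α ω)‖ :=
          mul_le_mul_of_nonneg_left (norm_sum_le _ _) (by positivity)
      _ ≤ (1 / (k:ℝ)) * ∑ _i : Fin k, C :=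
          mul_le_mul_of_nonneg_left (Finset.sum_le_sum fun i _ => hgtb i ω)
            (by positivity)
      _ = C := by field_simp; simp
  have hHint : Integrable (fun ω : Fin k → X × Bool =>
      ‖(1 / (k:ℝ)) • ∑ i, gtil (ω i).1 (α ω)‖ ^ 2) Pr := by
    refine Integrable.mono' (integrable_const (C ^ 2))
      hHm.aestronglyMeasurable (ae_of_all _ fun ω => ?_)
    rw [Real.norm_eq_abs, abs_of_nonneg (by positivity)]
    exact pow_le_pow_left₀ (norm_nonneg _) (hHb ω) 2
  -- pointwise Cauchy-Schwarz
  have hpt : ∀ ω : Fin k → X × Bool,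
      ‖(1 / (k:ℝ)) • ∑ i, gtil (ω i).1 (α ω)‖ ^ 2
        ≤ (1 / (k:ℝ)) * ∑ i, ‖gtil (ω i).1 (α ω)‖ ^ 2 := by
    intro ω
    set v := fun i : Fin k => gtil (ω i).1 (α ω) with hv
    have h1 : ‖∑ i, v i‖ ≤ ∑ i, ‖v i‖ := norm_sum_le _ _
    have h2 : (∑ i, ‖v i‖) ^ 2 ≤ (k:ℝ) * ∑ i, ‖v i‖ ^ 2 := by
      have := sq_sum_le_card_mul_sum_sq
        (s := (Finset.univ : Finset (Fin k))) (f := fun i => ‖v i‖)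
      simpa using this
    have h3 : ‖∑ i, v i‖ ^ 2 ≤ (k:ℝ) * ∑ i, ‖v i‖ ^ 2 :=
      le_trans (pow_le_pow_left₀ (norm_nonneg _) h1 2) h2
    rw [norm_smul, Real.norm_eq_abs, abs_of_pos (by positivity), mul_pow]
    calc (1 / (k:ℝ)) ^ 2 * ‖∑ i, v i‖ ^ 2
        ≤ (1 / (k:ℝ)) ^ 2 * ((k:ℝ) * ∑ i, ‖v i‖ ^ 2) :=
          mul_le_mul_of_nonneg_left h3 (by positivity)
      _ = (1 / (k:ℝ)) * ∑ i, ‖v i‖ ^ 2 := by field_simp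
  -- exchangeability: each coordinate has the same second moment
  have key : ∀ i : Fin k,
      ∫ ω, ‖gtil (ω i).1 (α ω)‖ ^ 2 ∂Pr = ∫ ω, ‖gtil (ω j).1 (α ω)‖ ^ 2 ∂Pr := by
    intro i
    set σ : Fin k ≃ Fin k := Equiv.swap i j with hσ
    set T := MeasurableEquiv.piCongrLeft (fun _ : Fin k => X × Bool) σ with hT
    have hTmp : MeasurePreserving T Pr Pr :=
      measurePreserving_piCongrLeft (fun _ => D) σ
    have hTapp : ∀ (ω : Fin k → X × Bool) (a : Fin k), T ω (σ a) = ω a := by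
      intro ω a
      rw [hT, MeasurableEquiv.coe_piCongrLeft]
      exact Equiv.piCongrLeft_apply_apply (P := fun _ : Fin k => X × Bool)
        (e := σ) ω a
    have hcomp : ∀ ω : Fin k → X × Bool,
        ‖gtil ((T ω) j).1 (α (T ω))‖ ^ 2 = ‖gtil (ω i).1 (α ω)‖ ^ 2 := by
      intro ω
      have h1 : (T ω) j = ω i := by
        have := hTapp ω i
        rwa [hσ, Equiv.swap_apply_left] at this
      have h2 : α (T ω) = α ω := by
        rw [hα, hα]
        congr 1
        rw [← Equiv.sum_comp σ (fun b => bval ((T ω) b).2)]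
        exact Finset.sum_congr rfl fun a _ => by rw [hTapp]
      rw [h1, h2]
    calc ∫ ω, ‖gtil (ω i).1 (α ω)‖ ^ 2 ∂Pr
        = ∫ ω, ‖gtil ((T ω) j).1 (α (T ω))‖ ^ 2 ∂Pr := by
          exact (integral_congr_ae (ae_of_all _ hcomp)).symm
      _ = ∫ ω, ‖gtil (ω j).1 (α ω)‖ ^ 2 ∂Pr :=
          hTmp.integral_comp' (fun ω => ‖gtil (ω j).1 (α ω)‖ ^ 2)
  -- put things together
  have hSint : Integrable (fun ω : Fin k → X × Bool =>
      (1 / (k:ℝ)) * ∑ i, ‖gtil (ω i).1 (α ω)‖ ^ 2) Pr :=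
    (integrable_finset_sum _ fun i _ => hFint i).const_mul _
  calc ∫ ω, ‖(1 / (k:ℝ)) • ∑ i, gtil (ω i).1 (α ω)‖ ^ 2 ∂Pr
      ≤ ∫ ω, (1 / (k:ℝ)) * ∑ i, ‖gtil (ω i).1 (α ω)‖ ^ 2 ∂Pr :=
        integral_mono hHint hSint hpt
    _ = (1 / (k:ℝ)) * ∑ i, ∫ ω, ‖gtil (ω i).1 (α ω)‖ ^ 2 ∂Pr := by
        rw [integral_const_mul, integral_finset_sum _ fun i _ => hFint i]
    _ = (1 / (k:ℝ)) * ∑ _i : Fin k, ∫ ω, ‖gtil (ω j).1 (α ω)‖ ^ 2 ∂Pr := by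
        rw [Finset.sum_congr rfl fun i _ => key i]
    _ = ∫ ω, ‖gtil (ω j).1 (α ω)‖ ^ 2 ∂Pr := by
        rw [Finset.sum_const]
        simp only [Finset.card_univ, Fintype.card_fin, nsmul_eq_mul]
        field_simp
end
end

section
/- Let (x_1,y_1),...,(x_k,y_k) be drawn i.i.d. from D, let α = (1/k)·Σ_{i=1}^k y_i, let g : X × {0,1} → ℝ^d be measurable with sup_{x,y} ‖g(x,y)‖ ≤ M, and write g̃_i = g̃(x_i, α) where g̃(x, α) = (k(α − p) + p)·g(x, 1) + (k(p − α) + (1 − p))·g(x, 0). Then for any index i ∈ [k], E[ ‖g̃_i‖² ] ≤ 9M² + (k−1)·p·(1−p)·E_{x∼D}[ ‖g(x, 1) − g(x, 0)‖² ]. -/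
open MeasureTheory Real

noncomputable section

section Aux
variable {β : Type*} [CommMonoid β] {k : ℕ}

lemma prod_ite_two (i j : Fin k) (hij : i ≠ j) (b c : Fin k → β) :
    ∏ m, (if m = i then b m else if m = j then c m else 1) = b i * c j := by
  rw [← Finset.mul_prod_erase Finset.univ _ (Finset.mem_univ i), if_pos rfl,
    ← Finset.mul_prod_erase _ _ (Finset.mem_erase.mpr ⟨hij.symm, Finset.mem_univ j⟩),
    if_neg hij.symm, if_pos rfl]
  have h1 : ∏ m ∈ (Finset.univ.erase i).erase j,
      (if m = i then b m else if m = j then c m else 1) = 1 := by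
    apply Finset.prod_eq_one
    intro m hm
    simp only [Finset.mem_erase] at hm
    rw [if_neg hm.2.1, if_neg hm.1]
  rw [h1, mul_one]

lemma prod_ite_three (i j l : Fin k) (hij : i ≠ j) (hil : i ≠ l) (hjl : j ≠ l)
    (b c e : Fin k → β) :
    ∏ m, (if m = i then b m else if m = j then c m else if m = l then e m else 1)
      = b i * (c j * e l) := by
  rw [← Finset.mul_prod_erase Finset.univ _ (Finset.mem_univ i), if_pos rfl,
    ← Finset.mul_prod_erase _ _ (Finset.mem_erase.mpr ⟨hij.symm, Finset.mem_univ j⟩),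
    if_neg hij.symm, if_pos rfl,
    ← Finset.mul_prod_erase _ _
      (Finset.mem_erase.mpr ⟨hjl.symm, Finset.mem_erase.mpr ⟨hil.symm, Finset.mem_univ l⟩⟩),
    if_neg hil.symm, if_neg hjl.symm, if_pos rfl]
  have h1 : ∏ m ∈ ((Finset.univ.erase i).erase j).erase l,
      (if m = i then b m else if m = j then c m else if m = l then e m else 1) = 1 := by
    apply Finset.prod_eq_one
    intro m hm
    simp only [Finset.mem_erase] at hm
    rw [if_neg hm.2.2.1, if_neg hm.2.1, if_neg hm.1]
  rw [h1, mul_one]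

end Aux

section IntAux
variable {E : Type*} [MeasureSpace E] [IsProbabilityMeasure (volume : Measure E)]
  {k : ℕ}

lemma integral_coord_one (i : Fin k) (u : E → ℝ) :
    ∫ ω : Fin k → E, u (ω i) = ∫ z, u z := by
  have h1 := integral_fintype_prod_eq_prod (𝕜 := ℝ) (ι := Fin k) (μ := fun _ => (volume : Measure E))
    (fun m z => if m = i then u z else 1)
  calc ∫ ω : Fin k → E, u (ω i)
      = ∫ ω : Fin k → E, ∏ m, (if m = i then u (ω m) else 1) := by
        congr 1; funext ω
        rw [Finset.prod_ite_eq' Finset.univ i (fun m => u (ω m))]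
        simp
    _ = ∏ m, ∫ z, (if m = i then u z else 1) := h1
    _ = ∏ m, (if m = i then (∫ z, u z) else 1) := by
        apply Finset.prod_congr rfl
        intro m _
        split_ifs <;> simp
    _ = ∫ z, u z := by
        rw [Finset.prod_ite_eq' Finset.univ i (fun _ => ∫ z, u z)]
        simp

lemma integral_coord_two (i j : Fin k) (hij : i ≠ j) (u v : E → ℝ) :
    ∫ ω : Fin k → E, u (ω i) * v (ω j) = (∫ z, u z) * ∫ z, v z := by
  have h1 := integral_fintype_prod_eq_prod (𝕜 := ℝ) (ι := Fin k) (μ := fun _ => (volume : Measure E))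
    (fun m z => if m = i then u z else if m = j then v z else 1)
  calc ∫ ω : Fin k → E, u (ω i) * v (ω j)
      = ∫ ω : Fin k → E, ∏ m, (if m = i then u (ω m) else if m = j then v (ω m) else 1) := by
        congr 1; funext ω
        rw [prod_ite_two i j hij (fun m => u (ω m)) (fun m => v (ω m))]
    _ = ∏ m, ∫ z, (if m = i then u z else if m = j then v z else 1) := h1
    _ = ∏ m, (if m = i then (∫ z, u z) else if m = j then (∫ z, v z) else 1) := by
        apply Finset.prod_congr rfl
        intro m _
        split_ifs <;> simp
    _ = (∫ z, u z) * ∫ z, v z :=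
        prod_ite_two i j hij (fun _ => ∫ z, u z) (fun _ => ∫ z, v z)

lemma integral_coord_three (i j l : Fin k) (hij : i ≠ j) (hil : i ≠ l) (hjl : j ≠ l)
    (u v w : E → ℝ) :
    ∫ ω : Fin k → E, u (ω i) * (v (ω j) * w (ω l))
      = (∫ z, u z) * ((∫ z, v z) * ∫ z, w z) := by
  have h1 := integral_fintype_prod_eq_prod (𝕜 := ℝ) (ι := Fin k) (μ := fun _ => (volume : Measure E))
    (fun m z => if m = i then u z else if m = j then v z else if m = l then w z else 1)
  calc ∫ ω : Fin k → E, u (ω i) * (v (ω j) * w (ω l))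
      = ∫ ω : Fin k → E, ∏ m,
          (if m = i then u (ω m) else if m = j then v (ω m) else if m = l then w (ω m) else 1) := by
        congr 1; funext ω
        rw [prod_ite_three i j l hij hil hjl]
    _ = ∏ m, ∫ z, (if m = i then u z else if m = j then v z else if m = l then w z else 1) := h1
    _ = ∏ m, (if m = i then (∫ z, u z) else if m = j then (∫ z, v z)
          else if m = l then (∫ z, w z) else 1) := by
        apply Finset.prod_congr rfl
        intro m _
        split_ifs <;> simp
    _ = (∫ z, u z) * ((∫ z, v z) * ∫ z, w z) :=
        prod_ite_three i j l hij hil hjl _ _ _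

lemma integrable_coord_two (i j : Fin k) (hij : i ≠ j) (u v : E → ℝ)
    (hu : Integrable u) (hv : Integrable v) :
    Integrable (fun ω : Fin k → E => u (ω i) * v (ω j)) := by
  have h1 : Integrable (fun ω : Fin k → E => ∏ m,
      (fun m z => if m = i then u z else if m = j then v z else (1:ℝ)) m (ω m)) := by
    apply Integrable.fintype_prod (𝕜 := ℝ)
      (f := fun m z => if m = i then u z else if m = j then v z else (1:ℝ))
    intro m
    by_cases h : m = i
    · simpa [h] using hu
    · by_cases h' : m = j
      · subst h'; simpa [h] using hv
      · simpa [h, h'] using (integrable_const (1:ℝ))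
  have : (fun ω : Fin k → E => u (ω i) * v (ω j)) = (fun ω : Fin k → E => ∏ m,
      (fun m z => if m = i then u z else if m = j then v z else (1:ℝ)) m (ω m)) := by
    funext ω
    exact (prod_ite_two i j hij (fun m => u (ω m)) (fun m => v (ω m))).symm
  rw [this]; exact h1

lemma integrable_coord_three (i j l : Fin k) (hij : i ≠ j) (hil : i ≠ l) (hjl : j ≠ l)
    (u v w : E → ℝ) (hu : Integrable u) (hv : Integrable v) (hw : Integrable w) :
    Integrable (fun ω : Fin k → E => u (ω i) * (v (ω j) * w (ω l))) := by
  have h1 : Integrable (fun ω : Fin k → E => ∏ m,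
      (fun m z => if m = i then u z else if m = j then v z else if m = l then w z else (1:ℝ)) m (ω m)) := by
    apply Integrable.fintype_prod (𝕜 := ℝ)
      (f := fun m z => if m = i then u z else if m = j then v z else if m = l then w z else (1:ℝ))
    intro m
    by_cases h : m = i
    · simpa [h] using hu
    · by_cases h' : m = j
      · subst h'; simpa [h] using hv
      · by_cases h'' : m = l
        · subst h''; simpa [h, h'] using hw
        · simpa [h, h', h''] using (integrable_const (1:ℝ))
  have : (fun ω : Fin k → E => u (ω i) * (v (ω j) * w (ω l))) = (fun ω : Fin k → E => ∏ m,
      (fun m z => if m = i then u z else if m = j then v z else if m = l then w z else (1:ℝ)) m (ω m)) := by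
    funext ω
    exact (prod_ite_three i j l hij hil hjl (fun m => u (ω m)) (fun m => v (ω m)) (fun m => w (ω m))).symm
  rw [this]; exact h1

lemma integrable_coord_one (i : Fin k) (u : E → ℝ) (hu : Integrable u) :
    Integrable (fun ω : Fin k → E => u (ω i)) := by
  have h1 : Integrable (fun ω : Fin k → E => ∏ m,
      (fun m z => if m = i then u z else (1:ℝ)) m (ω m)) := by
    apply Integrable.fintype_prod (𝕜 := ℝ)
      (f := fun m z => if m = i then u z else (1:ℝ))
    intro m
    by_cases h : m = i
    · simpa [h] using hu
    · simpa [h] using (integrable_const (1:ℝ))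
  have : (fun ω : Fin k → E => u (ω i)) = (fun ω : Fin k → E => ∏ m,
      (fun m z => if m = i then u z else (1:ℝ)) m (ω m)) := by
    funext ω
    rw [Finset.prod_ite_eq' Finset.univ i (fun m => u (ω m))]
    simp
  rw [this]; exact h1

end IntAux


/-- second-moment bound for a single soft-label corrected term.
If `sup ‖g‖ ≤ M` then for any `i ∈ [k]`,
`E‖g̃_i‖² ≤ 9M² + (k−1)p(1−p)·E_{x∼D}‖g(x,1) − g(x,0)‖²`,
where `E_{x∼D}` is over the marginal of `D` on `X`. -/
theorem stmt_6
    {X : Type*} [MeasurableSpace X] {d : ℕ}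
    (D : Measure (X × Bool)) [IsProbabilityMeasure D]
    (p : ℝ) (hp : p = (D {z : X × Bool | z.2 = true}).toReal)
    (k : ℕ) (hk : 1 ≤ k) (i : Fin k)
    (g : X × Bool → EuclideanSpace ℝ (Fin d)) (hg : Measurable g)
    (M : ℝ) (hgb : ∀ z, ‖g z‖ ≤ M)
    -- label proportion of the bag
    (α : (Fin k → X × Bool) → ℝ)
    (hα : ∀ ω, α ω = (1 / (k:ℝ)) * ∑ i', bval (ω i').2)
    -- the soft label corrected function
    (gtil : X → ℝ → EuclideanSpace ℝ (Fin d))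
    (hgtil : ∀ x a, gtil x a
        = ((k:ℝ) * (a - p) + p) • g (x, true)
          + ((k:ℝ) * (p - a) + (1 - p)) • g (x, false)) :
    ∫ ω, ‖gtil (ω i).1 (α ω)‖ ^ 2 ∂(Measure.pi fun _ : Fin k => D)
      ≤ 9 * M ^ 2
        + ((k:ℝ) - 1) * p * (1 - p)
            * ∫ x, ‖g (x, true) - g (x, false)‖ ^ 2 ∂(D.map Prod.fst) := by
  classical
  set Δ : X × Bool → EuclideanSpace ℝ (Fin d) := fun z => g (z.1, true) - g (z.1, false) with hΔdef
  set h : X × Bool → ℝ := fun z => bval z.2 - p with hhdef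
  set t : (Fin k → X × Bool) → ℝ := fun ω => ∑ j ∈ Finset.univ.erase i, h (ω j) with htdef
  have hk0 : (k:ℝ) ≠ 0 := Nat.cast_ne_zero.mpr (by omega)
  have hcard : ((Finset.univ.erase i).card : ℝ) = (k:ℝ) - 1 := by
    rw [Finset.card_erase_of_mem (Finset.mem_univ i), Finset.card_univ, Fintype.card_fin,
      Nat.cast_sub hk, Nat.cast_one]
  have hc : ∀ ω : Fin k → X × Bool, (k:ℝ) * (α ω - p) + p = bval ((ω i).2) + t ω := by
    intro ω
    rw [hα, htdef]
    have hsplit : ∑ i', bval ((ω i').2)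
        = bval ((ω i).2) + ∑ j ∈ Finset.univ.erase i, bval ((ω j).2) :=
      (Finset.add_sum_erase _ _ (Finset.mem_univ i)).symm
    simp only [hhdef]
    rw [Finset.sum_sub_distrib, Finset.sum_const, nsmul_eq_mul, hcard, hsplit]
    field_simp
    ring
  have hvec : ∀ ω : Fin k → X × Bool, gtil (ω i).1 (α ω) = g (ω i) + t ω • Δ (ω i) := by
    intro ω
    have h1 := hc ω
    have h2 : (k:ℝ) * (p - α ω) + (1 - p) = 1 - (bval ((ω i).2) + t ω) := by linarith
    rw [hgtil, h1, h2, hΔdef]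
    rcases hzeq : ω i with ⟨x, b⟩
    cases b with
    | false => simp only [bval]; simp only [Bool.false_eq_true, if_false]; module
    | true => simp only [bval, if_true]; module
  have key : ∀ ω : Fin k → X × Bool, ‖gtil (ω i).1 (α ω)‖^2
      = ‖g (ω i)‖^2 + t ω * (2 * (inner ℝ (g (ω i)) (Δ (ω i)) : ℝ))
        + t ω^2 * ‖Δ (ω i)‖^2 := by
    intro ω
    rw [hvec ω, norm_add_sq_real, real_inner_smul_right, norm_smul, Real.norm_eq_abs, mul_pow, sq_abs]
    ring
  -- measure space setup
  letI : MeasureSpace (X × Bool) := ⟨D⟩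
  haveI : IsProbabilityMeasure (volume : Measure (X × Bool)) := ‹IsProbabilityMeasure D›
  -- p bounds
  have hp0 : 0 ≤ p := hp ▸ ENNReal.toReal_nonneg
  have hp1 : p ≤ 1 := by
    rw [hp]
    calc (D {z : X × Bool | z.2 = true}).toReal
        ≤ (D Set.univ).toReal :=
          ENNReal.toReal_mono (measure_ne_top D _) (measure_mono (Set.subset_univ _))
      _ = 1 := by simp
  have hne : Nonempty (X × Bool) := by
    by_contra hcon
    rw [not_nonempty_iff] at hcon
    have h1 : D Set.univ = 1 := measure_univ
    rw [Set.univ_eq_empty_iff.mpr hcon] at h1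
    simp at h1
  have hM0 : 0 ≤ M := le_trans (norm_nonneg _) (hgb (Classical.arbitrary _))
  -- measurability
  have hset : MeasurableSet {z : X × Bool | z.2 = true} :=
    measurable_snd (measurableSet_singleton true)
  have hmbval : Measurable fun z : X × Bool => bval z.2 := by
    have heq : (fun z : X × Bool => bval z.2) = fun z => if z.2 = true then (1:ℝ) else 0 := by
      funext z; cases z.2 <;> simp [bval]
    rw [heq]
    exact Measurable.ite hset measurable_const measurable_const
  have hmΔ : Measurable Δ :=
    (hg.comp (measurable_fst.prodMk measurable_const)).sub
      (hg.comp (measurable_fst.prodMk measurable_const))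
  have hmh : Measurable h := hmbval.sub measurable_const
  have hmA : Measurable fun z : X × Bool => ‖g z‖^2 := hg.norm.pow_const 2
  have hmB : Measurable fun z : X × Bool => (inner ℝ (g z) (Δ z) : ℝ) := hg.inner hmΔ
  have hmC : Measurable fun z : X × Bool => ‖Δ z‖^2 := hmΔ.norm.pow_const 2
  -- integrability over D
  have int_of : ∀ (u : X × Bool → ℝ) (c : ℝ), Measurable u → (∀ z, |u z| ≤ c) →
      Integrable u D := by
    intro u c hu hb
    exact (integrable_const c).mono' hu.aestronglyMeasurable
      (ae_of_all _ (fun z => by simpa using hb z))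
  have hΔb : ∀ z, ‖Δ z‖ ≤ 2 * M := by
    intro z
    simp only [hΔdef]
    calc ‖g (z.1, true) - g (z.1, false)‖ ≤ ‖g (z.1, true)‖ + ‖g (z.1, false)‖ := norm_sub_le _ _
      _ ≤ 2 * M := by linarith [hgb (z.1, true), hgb (z.1, false)]
  have hhb : ∀ z : X × Bool, |h z| ≤ 1 := by
    intro z
    simp only [hhdef]
    cases z.2 <;> simp [bval] <;> rw [abs_le] <;> constructor <;> linarith
  have hIbval : Integrable (fun z : X × Bool => bval z.2) D := by
    apply int_of _ 1 hmbval
    intro z; cases z.2 <;> simp [bval]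
  have hIh : Integrable h D := by
    simp only [hhdef]; exact hIbval.sub (integrable_const p)
  have hIhh : Integrable (fun z : X × Bool => h z * h z) D := by
    apply int_of (fun z => h z * h z) 1 (hmh.mul hmh)
    intro z
    rw [abs_mul]
    calc |h z| * |h z| ≤ 1 * 1 := mul_le_mul (hhb z) (hhb z) (abs_nonneg _) zero_le_one
      _ = 1 := by ring
  have hIA : Integrable (fun z : X × Bool => ‖g z‖^2) D := by
    apply int_of _ (M^2) hmA
    intro z
    rw [abs_of_nonneg (by positivity)]
    exact pow_le_pow_left₀ (norm_nonneg _) (hgb z) 2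
  have hIC : Integrable (fun z : X × Bool => ‖Δ z‖^2) D := by
    apply int_of _ ((2*M)^2) hmC
    intro z
    rw [abs_of_nonneg (by positivity)]
    exact pow_le_pow_left₀ (norm_nonneg _) (hΔb z) 2
  have hIB : Integrable (fun z : X × Bool => (inner ℝ (g z) (Δ z) : ℝ)) D := by
    apply int_of _ (M * (2*M)) hmB
    intro z
    calc |(inner ℝ (g z) (Δ z) : ℝ)| ≤ ‖g z‖ * ‖Δ z‖ := abs_real_inner_le_norm _ _
      _ ≤ M * (2*M) := mul_le_mul (hgb z) (hΔb z) (norm_nonneg _) hM0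
  have hI2B : Integrable (fun z : X × Bool => 2 * (inner ℝ (g z) (Δ z) : ℝ)) D := hIB.const_mul 2
  -- integral values over D
  have hvalb : ∫ z : X × Bool, bval z.2 ∂D = p := by
    rw [hp, ← measureReal_def, ← integral_indicator_one hset]
    congr 1
    funext z
    rw [Set.indicator_apply]
    simp only [Set.mem_setOf_eq]
    rcases z with ⟨x, b⟩
    cases b <;> simp [bval]
  have hval0 : ∫ z : X × Bool, h z ∂D = 0 := by
    simp only [hhdef]
    rw [integral_sub hIbval (integrable_const p), hvalb, integral_const]
    simp
  have hval2 : ∫ z : X × Bool, h z * h z ∂D = p * (1 - p) := by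
    have hrw : (fun z : X × Bool => h z * h z) = fun z => (1 - 2*p) * bval z.2 + p^2 := by
      funext z
      simp only [hhdef]
      cases z.2 <;> simp [bval] <;> ring
    rw [hrw, integral_add (hIbval.const_mul _) (integrable_const _), integral_const_mul,
      hvalb, integral_const]
    simp
    ring
  -- relate ∫C over D to the map integral
  have hmΔ' : Measurable fun x : X => g (x, true) - g (x, false) :=
    (hg.comp (measurable_id.prodMk measurable_const)).sub
      (hg.comp (measurable_id.prodMk measurable_const))
  have hCmap : ∫ x, ‖g (x, true) - g (x, false)‖^2 ∂(D.map Prod.fst)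
      = ∫ z : X × Bool, ‖Δ z‖^2 ∂D := by
    rw [integral_map measurable_fst.aemeasurable
      (hmΔ'.norm.pow_const 2).aestronglyMeasurable]
  -- rewrite the pi measure as volume
  have hpi : (Measure.pi fun _ : Fin k => D) = (volume : Measure (Fin k → X × Bool)) := rfl
  rw [hpi]
  -- rewrite integrand as explicit sums of coordinate products
  have hrw1 : (fun ω : Fin k → X × Bool => ‖gtil (ω i).1 (α ω)‖^2)
      = fun ω => ‖g (ω i)‖^2
          + ((∑ j ∈ Finset.univ.erase i,
                h (ω j) * (2 * (inner ℝ (g (ω i)) (Δ (ω i)) : ℝ)))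
            + ∑ j ∈ Finset.univ.erase i, ∑ l ∈ Finset.univ.erase i,
                h (ω j) * (h (ω l) * ‖Δ (ω i)‖^2)) := by
    funext ω
    rw [key ω]
    have e1 : ∑ j ∈ Finset.univ.erase i, h (ω j) * (2 * (inner ℝ (g (ω i)) (Δ (ω i)) : ℝ))
        = t ω * (2 * (inner ℝ (g (ω i)) (Δ (ω i)) : ℝ)) := by
      simp only [htdef]
      rw [Finset.sum_mul]
    have e2 : ∑ j ∈ Finset.univ.erase i, ∑ l ∈ Finset.univ.erase i,
          h (ω j) * (h (ω l) * ‖Δ (ω i)‖^2)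
        = t ω ^ 2 * ‖Δ (ω i)‖^2 := by
      simp only [htdef]
      rw [sq (∑ j ∈ Finset.univ.erase i, h (ω j))]
      rw [Finset.sum_mul_sum (Finset.univ.erase i) (Finset.univ.erase i)
        (fun j => h (ω j)) (fun l => h (ω l)), Finset.sum_mul]
      apply Finset.sum_congr rfl
      intro j _
      rw [Finset.sum_mul]
      apply Finset.sum_congr rfl
      intro l _
      ring
    rw [e1, e2, add_assoc]
  rw [hrw1]
  -- integrability of the three pieces over the pi measure
  have hIA' : Integrable (fun ω : Fin k → X × Bool => ‖g (ω i)‖^2) :=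
    integrable_coord_one i _ hIA
  have hIS2 : Integrable (fun ω : Fin k → X × Bool =>
      ∑ j ∈ Finset.univ.erase i, h (ω j) * (2 * (inner ℝ (g (ω i)) (Δ (ω i)) : ℝ))) := by
    apply integrable_finset_sum
    intro j hj
    have hji : j ≠ i := Finset.ne_of_mem_erase hj
    exact integrable_coord_two j i hji h _ hIh hI2B
  have hIS3 : Integrable (fun ω : Fin k → X × Bool =>
      ∑ j ∈ Finset.univ.erase i, ∑ l ∈ Finset.univ.erase i,
        h (ω j) * (h (ω l) * ‖Δ (ω i)‖^2)) := by
    apply integrable_finset_sum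
    intro j hj
    apply integrable_finset_sum
    intro l hl
    have hji : j ≠ i := Finset.ne_of_mem_erase hj
    have hli : l ≠ i := Finset.ne_of_mem_erase hl
    by_cases hjl : j = l
    · subst hjl
      have heq : (fun ω : Fin k → X × Bool => h (ω j) * (h (ω j) * ‖Δ (ω i)‖^2))
          = fun ω => (fun z => h z * h z) (ω j) * (fun z : X × Bool => ‖Δ z‖^2) (ω i) := by
        funext ω; simp only; ring
      rw [heq]
      exact integrable_coord_two j i hji _ _ hIhh hIC
    · exact integrable_coord_three j l i hjl hji hli h h _ hIh hIh hIC
  have hIS23 : Integrable (fun ω : Fin k → X × Bool =>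
      (∑ j ∈ Finset.univ.erase i, h (ω j) * (2 * (inner ℝ (g (ω i)) (Δ (ω i)) : ℝ)))
      + ∑ j ∈ Finset.univ.erase i, ∑ l ∈ Finset.univ.erase i,
          h (ω j) * (h (ω l) * ‖Δ (ω i)‖^2)) := hIS2.add hIS3
  rw [integral_add hIA' hIS23, integral_add hIS2 hIS3]
  -- value of the first piece
  have hv1 : ∫ ω : Fin k → X × Bool, ‖g (ω i)‖^2 ≤ M^2 := by
    rw [integral_coord_one i (fun z : X × Bool => ‖g z‖^2)]
    calc ∫ z : X × Bool, ‖g z‖^2 ≤ ∫ _z : X × Bool, M^2 ∂D := by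
          apply integral_mono hIA (integrable_const _)
          intro z
          exact pow_le_pow_left₀ (norm_nonneg _) (hgb z) 2
      _ = M^2 := by rw [integral_const]; simp
  -- second piece is 0
  have hv2 : ∫ ω : Fin k → X × Bool,
      ∑ j ∈ Finset.univ.erase i, h (ω j) * (2 * (inner ℝ (g (ω i)) (Δ (ω i)) : ℝ)) = 0 := by
    rw [integral_finset_sum]
    · apply Finset.sum_eq_zero
      intro j hj
      have hji : j ≠ i := Finset.ne_of_mem_erase hj
      rw [integral_coord_two j i hji h (fun z : X × Bool => 2 * (inner ℝ (g z) (Δ z) : ℝ))]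
      rw [show ∫ z : X × Bool, h z = 0 from hval0]
      ring
    · intro j hj
      exact integrable_coord_two j i (Finset.ne_of_mem_erase hj) h _ hIh hI2B
  -- third piece
  have hv3 : ∫ ω : Fin k → X × Bool,
      ∑ j ∈ Finset.univ.erase i, ∑ l ∈ Finset.univ.erase i,
        h (ω j) * (h (ω l) * ‖Δ (ω i)‖^2)
      = ((k:ℝ) - 1) * (p * (1 - p) * ∫ z : X × Bool, ‖Δ z‖^2 ∂D) := by
    rw [integral_finset_sum]
    · have hterm : ∀ j ∈ Finset.univ.erase i,
          ∫ ω : Fin k → X × Bool, ∑ l ∈ Finset.univ.erase i,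
            h (ω j) * (h (ω l) * ‖Δ (ω i)‖^2)
          = p * (1 - p) * ∫ z : X × Bool, ‖Δ z‖^2 ∂D := by
        intro j hj
        have hji : j ≠ i := Finset.ne_of_mem_erase hj
        rw [integral_finset_sum]
        · have hterm2 : ∀ l ∈ Finset.univ.erase i,
              ∫ ω : Fin k → X × Bool, h (ω j) * (h (ω l) * ‖Δ (ω i)‖^2)
              = if l = j then p * (1 - p) * ∫ z : X × Bool, ‖Δ z‖^2 ∂D else 0 := by
            intro l hl
            have hli : l ≠ i := Finset.ne_of_mem_erase hl
            by_cases hlj : l = j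
            · subst hlj
              rw [if_pos rfl]
              have heq : (fun ω : Fin k → X × Bool => h (ω l) * (h (ω l) * ‖Δ (ω i)‖^2))
                  = fun ω => (fun z => h z * h z) (ω l) * (fun z : X × Bool => ‖Δ z‖^2) (ω i) := by
                funext ω; simp only; ring
              rw [heq, integral_coord_two l i hli (fun z => h z * h z)
                (fun z : X × Bool => ‖Δ z‖^2)]
              rw [show ∫ z : X × Bool, h z * h z = p * (1 - p) from hval2]
              rfl
            · rw [if_neg hlj]
              rw [integral_coord_three j l i (fun a => hlj a.symm) hji hli h h
                (fun z : X × Bool => ‖Δ z‖^2)]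
              rw [show ∫ z : X × Bool, h z = 0 from hval0]
              ring
          rw [Finset.sum_congr rfl hterm2, Finset.sum_ite_eq' (Finset.univ.erase i) j
            (fun _ => p * (1 - p) * ∫ z : X × Bool, ‖Δ z‖^2 ∂D), if_pos hj]
        · intro l hl
          have hli : l ≠ i := Finset.ne_of_mem_erase hl
          by_cases hlj : l = j
          · subst hlj
            have heq : (fun ω : Fin k → X × Bool => h (ω l) * (h (ω l) * ‖Δ (ω i)‖^2))
                = fun ω => (fun z => h z * h z) (ω l) * (fun z : X × Bool => ‖Δ z‖^2) (ω i) := by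
              funext ω; simp only; ring
            rw [heq]
            exact integrable_coord_two l i hli _ _ hIhh hIC
          · exact integrable_coord_three j l i (fun a => hlj a.symm) hji hli h h _ hIh hIh hIC
      rw [Finset.sum_congr rfl hterm, Finset.sum_const, nsmul_eq_mul, hcard]
    · intro j hj
      apply integrable_finset_sum
      intro l hl
      have hji : j ≠ i := Finset.ne_of_mem_erase hj
      have hli : l ≠ i := Finset.ne_of_mem_erase hl
      by_cases hjl : j = l
      · subst hjl
        have heq : (fun ω : Fin k → X × Bool => h (ω j) * (h (ω j) * ‖Δ (ω i)‖^2))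
            = fun ω => (fun z => h z * h z) (ω j) * (fun z : X × Bool => ‖Δ z‖^2) (ω i) := by
          funext ω; simp only; ring
        rw [heq]
        exact integrable_coord_two j i hji _ _ hIhh hIC
      · exact integrable_coord_three j l i hjl hji hli h h _ hIh hIh hIC
  rw [hv2, hv3, hCmap]
  have hfin : ((k:ℝ) - 1) * (p * (1 - p) * ∫ z : X × Bool, ‖Δ z‖^2 ∂D)
      = ((k:ℝ) - 1) * p * (1 - p) * ∫ z : X × Bool, ‖Δ z‖^2 ∂D := by ring
  rw [hfin]
  nlinarith [hv1, sq_nonneg M]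
end
end
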